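/- arXiv:2211.06094 — 4 statements merged into one kernel-verified Lean document; each statement's English description precedes it below -/
import Mathlib

section
/- Let g be a standard Gaussian random vector in ℝⁿ with a = E‖g‖₂. Then n - a² ≤ 4, i.e. a² ≥ n - 4. -/
open MeasureTheory ProbabilityTheory Real
open scoped NNReal ENNReal

lemma int_pow_exp (m : ℕ) : Integrable (fun x : ℝ => x ^ m * Real.exp (-(1/2) * x^2)) := by
  have h := integrable_rpow_mul_exp_neg_mul_sq (b := 1/2) (by norm_num) (s := (m:ℝ))
    (by exact_mod_cast neg_one_lt_zero.trans_le (Nat.cast_nonneg m))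
  simpa [Real.rpow_natCast] using h

lemma val_pow_exp (k : ℕ) : ∫ x : ℝ, x ^ (2*k) * Real.exp (-(1/2) * x^2)
    = 2 * ((1/2:ℝ) ^ (-(((2*k : ℕ):ℝ) + 1)/2) * (1/2) * Real.Gamma ((((2*k:ℕ):ℝ)+1)/2)) := by
  calc ∫ x : ℝ, x ^ (2*k) * Real.exp (-(1/2) * x^2)
      = ∫ x : ℝ, |x| ^ (2*k) * Real.exp (-(1/2) * |x|^2) := by
        refine integral_congr_ae (Filter.Eventually.of_forall fun x => ?_)
        simp [pow_mul, sq_abs]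
    _ = 2 * ∫ t in Set.Ioi (0:ℝ), t ^ (2*k) * Real.exp (-(1/2) * t^2) :=
        integral_comp_abs (f := fun t : ℝ => t ^ (2*k) * Real.exp (-(1/2) * t^2))
    _ = 2 * ∫ t in Set.Ioi (0:ℝ), t ^ (((2*k:ℕ)):ℝ) * Real.exp (-(1/2) * t^(2:ℝ)) := by
        congr 1
        refine setIntegral_congr_fun measurableSet_Ioi (fun t ht => ?_)
        rw [Real.rpow_natCast]
        norm_num [Real.rpow_two]
    _ = _ := by
        rw [integral_rpow_mul_exp_neg_mul_rpow (by norm_num)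
          (by exact_mod_cast neg_one_lt_zero.trans_le (Nat.cast_nonneg _)) (by norm_num)]

lemma m2_aux : ∫ x : ℝ, x ^ 2 * Real.exp (-(1/2) * x^2) = Real.sqrt (2*π) := by
  have h : (2 : ℕ) = 2 * 1 := rfl
  have hG : Real.Gamma ((((2*1:ℕ):ℝ)+1)/2) = Real.sqrt π / 2 := by
    norm_num
    rw [show (3:ℝ)/2 = 1/2 + 1 by norm_num, Real.Gamma_add_one (by norm_num),
      Real.Gamma_one_half_eq]
    ring
  have hR : (1/2:ℝ) ^ (-(((2*1 : ℕ):ℝ) + 1)/2) = 2 * Real.sqrt 2 := by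
    rw [show (-(((2*1 : ℕ):ℝ) + 1)/2) = -((3:ℝ)/2) by norm_num, one_div,
      ← Real.rpow_neg_one (2:ℝ), ← Real.rpow_mul (by norm_num)]
    rw [show (-1:ℝ) * -((3:ℝ)/2) = 1 + 1/2 by norm_num, Real.rpow_add (by norm_num),
      Real.rpow_one, ← Real.sqrt_eq_rpow]
  calc ∫ x : ℝ, x ^ 2 * Real.exp (-(1/2) * x^2)
      = 2 * ((1/2:ℝ) ^ (-(((2*1 : ℕ):ℝ) + 1)/2) * (1/2) * Real.Gamma ((((2*1:ℕ):ℝ)+1)/2)) := by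
        rw [← val_pow_exp 1]
    _ = Real.sqrt (2*π) := by
        rw [hG, hR, Real.sqrt_mul (by norm_num)]
        ring
lemma m4_aux : ∫ x : ℝ, x ^ 4 * Real.exp (-(1/2) * x^2) = 3 * Real.sqrt (2*π) := by
  have hG : Real.Gamma ((((2*2:ℕ):ℝ)+1)/2) = 3 * Real.sqrt π / 4 := by
    norm_num
    rw [show (5:ℝ)/2 = 3/2 + 1 by norm_num, Real.Gamma_add_one (by norm_num),
      show (3:ℝ)/2 = 1/2 + 1 by norm_num, Real.Gamma_add_one (by norm_num),
      Real.Gamma_one_half_eq]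
    ring
  have hR : (1/2:ℝ) ^ (-(((2*2 : ℕ):ℝ) + 1)/2) = 4 * Real.sqrt 2 := by
    rw [show (-(((2*2 : ℕ):ℝ) + 1)/2) = -((5:ℝ)/2) by norm_num, one_div,
      ← Real.rpow_neg_one (2:ℝ), ← Real.rpow_mul (by norm_num)]
    rw [show (-1:ℝ) * -((5:ℝ)/2) = 2 + 1/2 by norm_num, Real.rpow_add (by norm_num),
      ← Real.sqrt_eq_rpow, Real.rpow_two]
    norm_num
  calc ∫ x : ℝ, x ^ 4 * Real.exp (-(1/2) * x^2)
      = 2 * ((1/2:ℝ) ^ (-(((2*2 : ℕ):ℝ) + 1)/2) * (1/2) * Real.Gamma ((((2*2:ℕ):ℝ)+1)/2)) := by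
        rw [← val_pow_exp 2]
    _ = 3 * Real.sqrt (2*π) := by
        rw [hG, hR, Real.sqrt_mul (by norm_num)]
        ring
noncomputable def G : Measure ℝ := gaussianReal 0 1

lemma G_eq : G = (volume : Measure ℝ).withDensity
    (fun x => ((Real.toNNReal (gaussianPDFReal 0 1 x) : ℝ≥0) : ℝ≥0∞)) := by
  rw [G, gaussianReal_of_var_ne_zero _ one_ne_zero]
  rfl

lemma pdf_eq (x : ℝ) : gaussianPDFReal 0 1 x
    = (Real.sqrt (2*π))⁻¹ * Real.exp (-(1/2) * x^2) := by
  simp only [gaussianPDFReal, NNReal.coe_one, mul_one, sub_zero]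
  rw [show -x^2/2 = -(1/2)*x^2 by ring]

lemma pdf_nonneg (x : ℝ) : 0 ≤ gaussianPDFReal 0 1 x := gaussianPDFReal_nonneg 0 1 x

lemma smul_pdf (g : ℝ → ℝ) (x : ℝ) :
    (Real.toNNReal (gaussianPDFReal 0 1 x)) • g x
      = (Real.sqrt (2*π))⁻¹ * (g x * Real.exp (-(1/2) * x^2)) := by
  rw [NNReal.smul_def, Real.coe_toNNReal _ (pdf_nonneg x), pdf_eq]
  simp only [smul_eq_mul]
  ring

lemma integrable_G_pow (m : ℕ) : Integrable (fun y : ℝ => y ^ m) G := by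
  rw [G_eq, integrable_withDensity_iff_integrable_smul
    ((measurable_gaussianPDFReal 0 1).real_toNNReal)]
  refine (((int_pow_exp m).const_mul ((Real.sqrt (2*π))⁻¹)).congr ?_)
  exact Filter.Eventually.of_forall fun x => (smul_pdf (fun y => y ^ m) x).symm

lemma integral_G_pow (m : ℕ) : ∫ y, y ^ m ∂G
    = (Real.sqrt (2*π))⁻¹ * ∫ x : ℝ, x ^ m * Real.exp (-(1/2) * x^2) := by
  rw [G_eq, integral_withDensity_eq_integral_smul
    ((measurable_gaussianPDFReal 0 1).real_toNNReal)]
  simp_rw [smul_pdf (fun y => y ^ m)]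
  rw [integral_const_mul]

lemma sqrt2pi_ne : Real.sqrt (2*π) ≠ 0 := by
  positivity

lemma G_m2 : ∫ y, y ^ 2 ∂G = 1 := by
  rw [integral_G_pow 2, m2_aux, inv_mul_cancel₀ sqrt2pi_ne]

lemma G_m4 : ∫ y, y ^ 4 ∂G = 3 := by
  rw [integral_G_pow 4, m4_aux]
  field_simp

instance : IsProbabilityMeasure G := by rw [G]; infer_instance

lemma G_m0 : ∫ _ : ℝ, (1:ℝ) ∂G = 1 := by simp
lemma G_def : G = gaussianReal 0 1 := rfl

instance : SigmaFinite G := by rw [G_def]; infer_instance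

lemma pi_prod (n : ℕ) (f : Fin n → ℝ → ℝ) :
    ∫ x : Fin n → ℝ, ∏ i, f i (x i) ∂(Measure.pi fun _ : Fin n => G)
      = ∏ i, ∫ y, f i y ∂G := by
  letI : MeasureSpace ℝ := ⟨G⟩
  haveI : SigmaFinite (volume : Measure ℝ) := inferInstanceAs (SigmaFinite G)
  rw [show (Measure.pi fun _ : Fin n => G) = (volume : Measure (Fin n → ℝ)) from
    (MeasureTheory.volume_pi (ι := Fin n)).symm]
  exact MeasureTheory.integral_fin_nat_prod_eq_prod f

lemma pi_prod_integrable (n : ℕ) (f : Fin n → ℝ → ℝ) (hf : ∀ i, Integrable (f i) G) :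
    Integrable (fun x : Fin n → ℝ => ∏ i, f i (x i)) (Measure.pi fun _ : Fin n => G) := by
  letI : MeasureSpace ℝ := ⟨G⟩
  haveI : SigmaFinite (volume : Measure ℝ) := inferInstanceAs (SigmaFinite G)
  rw [show (Measure.pi fun _ : Fin n => G) = (volume : Measure (Fin n → ℝ)) from
    (MeasureTheory.volume_pi (ι := Fin n)).symm]
  exact MeasureTheory.Integrable.fin_nat_prod hf
section PiMoments
variable (n : ℕ)

noncomputable def μpi (n : ℕ) : Measure (Fin n → ℝ) := Measure.pi fun _ : Fin n => G

instance : IsProbabilityMeasure (μpi n) := by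
  rw [μpi]; infer_instance

lemma pi_prod' (f : Fin n → ℝ → ℝ) :
    ∫ x : Fin n → ℝ, ∏ i, f i (x i) ∂(μpi n) = ∏ i, ∫ y, f i y ∂G := by
  rw [μpi]; exact pi_prod n f

lemma sq_eq_prod (i : Fin n) (x : Fin n → ℝ) :
    (x i)^2 = ∏ j, (if i = j then (x j)^2 else 1) := by
  rw [Finset.prod_ite_eq]
  simp

lemma integrable_ite_sq (i j : Fin n) :
    Integrable (fun y : ℝ => if i = j then y^2 else 1) G := by
  by_cases h : i = j <;> simp [h, integrable_G_pow 2]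

lemma integral_ite_sq (i j : Fin n) :
    ∫ y, (if i = j then y^2 else 1) ∂G = 1 := by
  by_cases h : i = j <;> simp [h, G_m2]

lemma integrable_sq_coord (i : Fin n) :
    Integrable (fun x : Fin n → ℝ => (x i)^2) (μpi n) := by
  have := pi_prod_integrable n (fun j y => if i = j then y^2 else 1)
    (fun j => integrable_ite_sq n i j)
  refine this.congr (Filter.Eventually.of_forall fun x => ?_)
  exact (sq_eq_prod n i x).symm

lemma integral_sq_coord (i : Fin n) :
    ∫ x, (x i)^2 ∂(μpi n) = 1 := by
  calc ∫ x, (x i)^2 ∂(μpi n)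
      = ∫ x, ∏ j, (if i = j then (x j)^2 else 1) ∂(μpi n) := by
        refine integral_congr_ae (Filter.Eventually.of_forall fun x => ?_)
        exact sq_eq_prod n i x
    _ = ∏ j, ∫ y, (if i = j then y^2 else 1) ∂G := pi_prod' n (fun j y => if i = j then y^2 else 1)
    _ = 1 := by
        rw [Finset.prod_congr rfl (fun j _ => integral_ite_sq n i j)]
        simp

lemma integrable_Q : Integrable (fun x : Fin n → ℝ => ∑ i, (x i)^2) (μpi n) :=
  integrable_finset_sum _ (fun i _ => integrable_sq_coord n i)

lemma integral_Q : ∫ x, (∑ i, (x i)^2) ∂(μpi n) = n := by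
  rw [integral_finset_sum _ (fun i _ => integrable_sq_coord n i)]
  simp [integral_sq_coord n]

-- second moment of Q
lemma gij_eq (i j : Fin n) (x : Fin n → ℝ) :
    (x i)^2 * (x j)^2
      = ∏ k, ((if i = k then (x k)^2 else 1) * (if j = k then (x k)^2 else 1)) := by
  rw [Finset.prod_mul_distrib, Finset.prod_ite_eq, Finset.prod_ite_eq]
  simp

lemma integrable_gij (i j k : Fin n) :
    Integrable (fun y : ℝ => (if i = k then y^2 else 1) * (if j = k then y^2 else 1)) G := by
  by_cases h1 : i = k <;> by_cases h2 : j = k <;>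
    simp only [h1, h2, if_true, if_false, mul_one, one_mul, ← pow_add] <;>
    first
      | exact integrable_G_pow 4
      | exact integrable_G_pow 2
      | exact integrable_const 1

lemma integral_gij (i j k : Fin n) :
    ∫ y, ((if i = k then y^2 else 1) * (if j = k then y^2 else 1)) ∂G
      = if i = k ∧ j = k then 3 else 1 := by
  by_cases h1 : i = k <;> by_cases h2 : j = k <;>
    simp only [h1, h2, if_true, if_false, mul_one, one_mul, and_self, true_and, false_and,
      and_false] <;>
    first
      | (rw [show (fun y : ℝ => y^2*y^2) = fun y : ℝ => y^4 from funext fun y => by ring]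
         exact G_m4)
      | exact G_m2
      | exact G_m0
      | simp

lemma prod_integral_gij (i j : Fin n) :
    (∏ k, ∫ y, ((if i = k then y^2 else 1) * (if j = k then y^2 else 1)) ∂G)
      = if i = j then 3 else 1 := by
  rw [Finset.prod_congr rfl (fun k _ => integral_gij n i j k)]
  by_cases h : i = j
  · subst h
    simp [and_self, Finset.prod_ite_eq]
  · have : ∀ k : Fin n, ¬(i = k ∧ j = k) := by
      rintro k ⟨rfl, rfl⟩; exact h rfl
    simp [this, h]

lemma integrable_sq_pair (i j : Fin n) :
    Integrable (fun x : Fin n → ℝ => (x i)^2 * (x j)^2) (μpi n) := by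
  have := pi_prod_integrable n
    (fun k y => (if i = k then y^2 else 1) * (if j = k then y^2 else 1))
    (fun k => integrable_gij n i j k)
  refine this.congr (Filter.Eventually.of_forall fun x => ?_)
  exact (gij_eq n i j x).symm

lemma integral_sq_pair (i j : Fin n) :
    ∫ x, (x i)^2 * (x j)^2 ∂(μpi n) = if i = j then 3 else 1 := by
  calc ∫ x, (x i)^2 * (x j)^2 ∂(μpi n)
      = ∫ x, ∏ k, ((if i = k then (x k)^2 else 1) * (if j = k then (x k)^2 else 1)) ∂(μpi n) := by
        refine integral_congr_ae (Filter.Eventually.of_forall fun x => ?_)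
        exact gij_eq n i j x
    _ = ∏ k, ∫ y, ((if i = k then y^2 else 1) * (if j = k then y^2 else 1)) ∂G :=
        pi_prod' n (fun k y => (if i = k then y^2 else 1) * (if j = k then y^2 else 1))
    _ = if i = j then 3 else 1 := prod_integral_gij n i j

lemma Qsq_expand (x : Fin n → ℝ) :
    (∑ i, (x i)^2)^2 = ∑ i, ∑ j, (x i)^2 * (x j)^2 := by
  rw [sq, Finset.sum_mul_sum]

lemma integrable_Qsq : Integrable (fun x : Fin n → ℝ => (∑ i, (x i)^2)^2) (μpi n) := by
  have : Integrable (fun x : Fin n → ℝ => ∑ i, ∑ j, (x i)^2 * (x j)^2) (μpi n) :=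
    integrable_finset_sum _ (fun i _ => integrable_finset_sum _
      (fun j _ => integrable_sq_pair n i j))
  refine this.congr (Filter.Eventually.of_forall fun x => ?_)
  exact (Qsq_expand n x).symm

lemma integral_Qsq : ∫ x, (∑ i, (x i)^2)^2 ∂(μpi n) = (n:ℝ)^2 + 2*n := by
  calc ∫ x, (∑ i, (x i)^2)^2 ∂(μpi n)
      = ∫ x, ∑ i, ∑ j, (x i)^2 * (x j)^2 ∂(μpi n) := by
        refine integral_congr_ae (Filter.Eventually.of_forall fun x => ?_)
        exact Qsq_expand n x
    _ = ∑ i, ∑ j : Fin n, ((if i = j then (3:ℝ) else 1)) := by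
        rw [integral_finset_sum _ (fun i _ => integrable_finset_sum _
          (fun j _ => integrable_sq_pair n i j))]
        refine Finset.sum_congr rfl (fun i _ => ?_)
        rw [integral_finset_sum _ (fun j _ => integrable_sq_pair n i j)]
        exact Finset.sum_congr rfl (fun j _ => integral_sq_pair n i j)
    _ = (n:ℝ)^2 + 2*n := by
        have : ∀ i : Fin n, ∑ j : Fin n, ((if i = j then (3:ℝ) else 1)) = (n:ℝ) + 2 := by
          intro i
          calc ∑ j : Fin n, ((if i = j then (3:ℝ) else 1))
              = ∑ j : Fin n, ((1:ℝ) + if i = j then (2:ℝ) else 0) :=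
                Finset.sum_congr rfl (fun j _ => by by_cases h : i = j <;> simp [h] <;> norm_num)
            _ = (n:ℝ) + 2 := by
                rw [Finset.sum_add_distrib, Finset.sum_ite_eq]
                simp
        rw [Finset.sum_congr rfl (fun i _ => this i)]
        simp [Finset.sum_const]
        ring

end PiMoments

lemma cs_lintegral {α : Type*} [MeasurableSpace α] (μ : Measure α) (f g : α → ℝ≥0∞)
    (hf : AEMeasurable f μ) (hg : AEMeasurable g μ) :
    (∫⁻ a, f a * g a ∂μ)^2 ≤ (∫⁻ a, (f a)^2 ∂μ) * (∫⁻ a, (g a)^2 ∂μ) := by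
  have hpq : Real.HolderConjugate 2 2 := Real.HolderConjugate.two_two
  have h := ENNReal.lintegral_mul_le_Lp_mul_Lq μ hpq hf hg
  have h2 : (∫⁻ a, f a * g a ∂μ)^2
      ≤ ((∫⁻ a, (f a)^(2:ℝ) ∂μ) ^ ((1:ℝ)/2) * (∫⁻ a, (g a)^(2:ℝ) ∂μ) ^ ((1:ℝ)/2))^2 := by
    exact pow_le_pow_left' h 2
  refine h2.trans_eq ?_
  rw [mul_pow, ← ENNReal.rpow_natCast (_ ^ ((1:ℝ)/2)) 2, ← ENNReal.rpow_natCast (_ ^ ((1:ℝ)/2)) 2,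
    ← ENNReal.rpow_mul, ← ENNReal.rpow_mul]
  norm_num
theorem gaussian_norm_mean_sq (n : ℕ) (hn : 0 < n)
    (a : ℝ)
    (ha : a = ∫ x, Real.sqrt (∑ i, (x i) ^ 2)
        ∂(Measure.pi fun _ : Fin n => gaussianReal 0 1)) :
    (n : ℝ) - a ^ 2 ≤ 4 := by
  have hpi : (Measure.pi fun _ : Fin n => gaussianReal 0 1) = μpi n := rfl
  set μ := μpi n with hμ
  set Q : (Fin n → ℝ) → ℝ := fun x => ∑ i, (x i)^2 with hQ
  have hQm : Measurable Q := by
    apply Finset.measurable_sum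
    exact fun i _ => (measurable_pi_apply i).pow_const 2
  have hQ0 : ∀ x, 0 ≤ Q x := fun x => Finset.sum_nonneg fun i _ => sq_nonneg _
  -- the four lintegrals
  set A := ∫⁻ x, ENNReal.ofReal (Real.sqrt (Q x)) ∂μ with hA
  set B := ∫⁻ x, ENNReal.ofReal (Q x) ∂μ with hB
  set C := ∫⁻ x, ENNReal.ofReal (Q x * Real.sqrt (Q x)) ∂μ with hC
  set D := ∫⁻ x, ENNReal.ofReal ((Q x)^2) ∂μ with hD
  have hBval : B = ENNReal.ofReal (n:ℝ) := by
    rw [hB, ← ofReal_integral_eq_lintegral_ofReal (integrable_Q n)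
      (Filter.Eventually.of_forall hQ0), integral_Q n]
  have hDval : D = ENNReal.ofReal ((n:ℝ)^2 + 2*n) := by
    rw [hD, ← ofReal_integral_eq_lintegral_ofReal (integrable_Qsq n)
      (Filter.Eventually.of_forall fun x => sq_nonneg (Q x)), integral_Qsq n]
  -- a = A.toReal
  have haA : a = A.toReal := by
    rw [ha, hpi, integral_eq_lintegral_of_nonneg_ae
      (Filter.Eventually.of_forall fun x => Real.sqrt_nonneg _)
      (hQm.sqrt.aestronglyMeasurable)]
  -- CS inequalities
  have hmS : AEMeasurable (fun x => ENNReal.ofReal (Real.sqrt (Q x))) μ :=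
    (hQm.sqrt.ennreal_ofReal).aemeasurable
  have hmQ : AEMeasurable (fun x => ENNReal.ofReal (Q x)) μ :=
    (hQm.ennreal_ofReal).aemeasurable
  have csa : B^2 ≤ A * C := by
    have h := cs_lintegral μ
      (fun x => ENNReal.ofReal (Real.sqrt (Real.sqrt (Q x))))
      (fun x => ENNReal.ofReal (Real.sqrt (Q x) * Real.sqrt (Real.sqrt (Q x))))
      ((hQm.sqrt.sqrt.ennreal_ofReal).aemeasurable)
      (((hQm.sqrt.mul hQm.sqrt.sqrt).ennreal_ofReal).aemeasurable)
    calc B^2 = (∫⁻ x, ENNReal.ofReal (Real.sqrt (Real.sqrt (Q x)))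
          * ENNReal.ofReal (Real.sqrt (Q x) * Real.sqrt (Real.sqrt (Q x))) ∂μ)^2 := by
          rw [hB]
          congr 1
          refine lintegral_congr fun x => ?_
          rw [← ENNReal.ofReal_mul (Real.sqrt_nonneg _)]
          congr 1
          have h1 : Real.sqrt (Real.sqrt (Q x)) * Real.sqrt (Real.sqrt (Q x))
              = Real.sqrt (Q x) := Real.mul_self_sqrt (Real.sqrt_nonneg _)
          have h2 : Real.sqrt (Q x) * Real.sqrt (Q x) = Q x :=
            Real.mul_self_sqrt (hQ0 x)
          calc Q x = (Real.sqrt (Q x) * Real.sqrt (Q x)) := h2.symm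
            _ = (Real.sqrt (Real.sqrt (Q x)) * Real.sqrt (Real.sqrt (Q x)))
                  * Real.sqrt (Q x) := by rw [h1]
            _ = Real.sqrt (Real.sqrt (Q x)) * (Real.sqrt (Q x)
                  * Real.sqrt (Real.sqrt (Q x))) := by ring
      _ ≤ (∫⁻ x, (ENNReal.ofReal (Real.sqrt (Real.sqrt (Q x))))^2 ∂μ)
            * (∫⁻ x, (ENNReal.ofReal (Real.sqrt (Q x) * Real.sqrt (Real.sqrt (Q x))))^2 ∂μ) := h
      _ = A * C := by
          rw [hA, hC]
          congr 1 <;> refine lintegral_congr fun x => ?_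
          · rw [← ENNReal.ofReal_pow (Real.sqrt_nonneg _), sq,
              Real.mul_self_sqrt (Real.sqrt_nonneg _)]
          · rw [← ENNReal.ofReal_pow (by positivity)]
            congr 1
            have h1 : Real.sqrt (Real.sqrt (Q x)) * Real.sqrt (Real.sqrt (Q x))
                = Real.sqrt (Q x) := Real.mul_self_sqrt (Real.sqrt_nonneg _)
            have h2 : Real.sqrt (Q x) * Real.sqrt (Q x) = Q x :=
              Real.mul_self_sqrt (hQ0 x)
            calc (Real.sqrt (Q x) * Real.sqrt (Real.sqrt (Q x)))^2
                = (Real.sqrt (Q x) * Real.sqrt (Q x))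
                  * (Real.sqrt (Real.sqrt (Q x)) * Real.sqrt (Real.sqrt (Q x))) := by ring
              _ = Q x * Real.sqrt (Q x) := by rw [h1, h2]
  have csb : C^2 ≤ B * D := by
    have h := cs_lintegral μ
      (fun x => ENNReal.ofReal (Real.sqrt (Q x)))
      (fun x => ENNReal.ofReal (Q x)) hmS hmQ
    calc C^2 = (∫⁻ x, ENNReal.ofReal (Real.sqrt (Q x)) * ENNReal.ofReal (Q x) ∂μ)^2 := by
          rw [hC]
          congr 1
          refine lintegral_congr fun x => ?_
          rw [← ENNReal.ofReal_mul (Real.sqrt_nonneg _), mul_comm]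
      _ ≤ (∫⁻ x, (ENNReal.ofReal (Real.sqrt (Q x)))^2 ∂μ)
            * (∫⁻ x, (ENNReal.ofReal (Q x))^2 ∂μ) := h
      _ = B * D := by
          rw [hB, hD]
          congr 1 <;> refine lintegral_congr fun x => ?_
          · rw [← ENNReal.ofReal_pow (Real.sqrt_nonneg _), sq, Real.mul_self_sqrt (hQ0 x)]
          · rw [← ENNReal.ofReal_pow (hQ0 x)]
  -- finiteness
  have hBfin : B ≠ ⊤ := by rw [hBval]; exact ENNReal.ofReal_ne_top
  have hDfin : D ≠ ⊤ := by rw [hDval]; exact ENNReal.ofReal_ne_top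
  have hAfin : A ≠ ⊤ := by
    have hb : A ≤ 1 + B := by
      have hpt : ∀ x, ENNReal.ofReal (Real.sqrt (Q x)) ≤ 1 + ENNReal.ofReal (Q x) := by
        intro x
        have h1 : Real.sqrt (Q x) ≤ 1 + Q x := by
          nlinarith [Real.sq_sqrt (hQ0 x), Real.sqrt_nonneg (Q x), hQ0 x]
        calc ENNReal.ofReal (Real.sqrt (Q x)) ≤ ENNReal.ofReal (1 + Q x) :=
              ENNReal.ofReal_le_ofReal h1
          _ = 1 + ENNReal.ofReal (Q x) := by
              rw [ENNReal.ofReal_add zero_le_one (hQ0 x), ENNReal.ofReal_one]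
      calc A ≤ ∫⁻ x, (1 + ENNReal.ofReal (Q x)) ∂μ := lintegral_mono hpt
        _ = 1 + B := by
            rw [lintegral_add_left measurable_const, lintegral_one, measure_univ, hB]
    exact ne_top_of_le_ne_top (by rw [hBval]; exact (ENNReal.add_ne_top.mpr
      ⟨ENNReal.one_ne_top, ENNReal.ofReal_ne_top⟩)) hb
  have hCfin : C ≠ ⊤ := by
    intro hCtop
    rw [hCtop] at csb
    simp [ENNReal.top_pow] at csb
    exact (ENNReal.mul_ne_top hBfin hDfin) csb
  -- to reals
  have hb0 : 0 ≤ A.toReal := ENNReal.toReal_nonneg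
  have hc0 : 0 ≤ C.toReal := ENNReal.toReal_nonneg
  have hra : ((n:ℝ))^2 ≤ A.toReal * C.toReal := by
    have := ENNReal.toReal_mono (ENNReal.mul_ne_top hAfin hCfin) csa
    rw [ENNReal.toReal_pow, ENNReal.toReal_mul, hBval,
      ENNReal.toReal_ofReal (by positivity)] at this
    exact this
  have hrb : C.toReal^2 ≤ (n:ℝ) * ((n:ℝ)^2 + 2*n) := by
    have := ENNReal.toReal_mono (ENNReal.mul_ne_top hBfin hDfin) csb
    rw [ENNReal.toReal_pow, ENNReal.toReal_mul, hBval, hDval,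
      ENNReal.toReal_ofReal (by positivity), ENNReal.toReal_ofReal (by positivity)] at this
    exact this
  -- final algebra
  have hn1 : (1:ℝ) ≤ n := by exact_mod_cast hn
  rw [haA]
  nlinarith [sq_nonneg (A.toReal), sq_nonneg (C.toReal), mul_pos (lt_of_lt_of_le zero_lt_one hn1)
    (by positivity : (0:ℝ) < (n:ℝ)^2 + 2*n), hra, hrb, sq_nonneg ((n:ℝ)^2 - A.toReal * C.toReal)]
end

section
/- Let K ⊂ ℝⁿ be centrally symmetric convex with B₂ⁿ ⊂ K ⊂ √n B₂ⁿ, and let P, Q be rank-k orthogonal projections with ‖P-Q‖ ≤ 1/(2√n). Then PK ⊂ 2·PQK, i.e. for every x ∈ ℝⁿ the support functions satisfy h_{PK}(x) ≤ 2 h_{PQK}(x). -/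
open MeasureTheory Module Pointwise

theorem proj_subset_two_smul (n k : ℕ) (hk : 1 ≤ k) (hkn : k ≤ n)
    (K : Set (EuclideanSpace ℝ (Fin n)))
    (hKconv : Convex ℝ K) (hKcomp : IsCompact K) (hKint : (interior K).Nonempty)
    (hKsym : K = -K)
    (hKJohn₁ : Metric.closedBall (0 : EuclideanSpace ℝ (Fin n)) 1 ⊆ K)
    (hKJohn₂ : K ⊆ Metric.closedBall (0 : EuclideanSpace ℝ (Fin n)) (Real.sqrt n))
    (P Q : EuclideanSpace ℝ (Fin n) →L[ℝ] EuclideanSpace ℝ (Fin n))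
    (hPproj : P ∘L P = P) (hQproj : Q ∘L Q = Q)
    (hPsa : ∀ x y, (inner ℝ (P x) y : ℝ) = inner ℝ x (P y))
    (hQsa : ∀ x y, (inner ℝ (Q x) y : ℝ) = inner ℝ x (Q y))
    (hPrank : finrank ℝ (LinearMap.range (P : EuclideanSpace ℝ (Fin n) →ₗ[ℝ]
        EuclideanSpace ℝ (Fin n))) = k)
    (hQrank : finrank ℝ (LinearMap.range (Q : EuclideanSpace ℝ (Fin n) →ₗ[ℝ]
        EuclideanSpace ℝ (Fin n))) = k)
    (hPQ : ‖P - Q‖ ≤ 1 / (2 * Real.sqrt n)) :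
    P '' K ⊆ ((2 : ℝ) • ((P ∘L Q) '' K) : Set (EuclideanSpace ℝ (Fin n))) := by
  intro p hp
  obtain ⟨x, hxK, rfl⟩ := hp
  have hn1 : (1:ℝ) ≤ n := by exact_mod_cast hk.trans hkn
  have hsn1 : (1:ℝ) ≤ Real.sqrt n := by
    rw [show (1:ℝ) = Real.sqrt 1 by simp]
    exact Real.sqrt_le_sqrt hn1
  have hsn0 : (0:ℝ) < Real.sqrt n := lt_of_lt_of_le one_pos hsn1
  have h0K : (0 : EuclideanSpace ℝ (Fin n)) ∈ K := hKJohn₁ (by simp)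
  set T : EuclideanSpace ℝ (Fin n) →L[ℝ] EuclideanSpace ℝ (Fin n) := (2:ℝ) • (P - Q) with hT
  set y : ℕ → EuclideanSpace ℝ (Fin n) := fun m => (⇑T)^[m] x with hy
  have hy0 : y 0 = x := rfl
  have hysucc : ∀ m, y (m+1) = T (y m) := fun m => Function.iterate_succ_apply' T m x
  have hTle : ∀ v : EuclideanSpace ℝ (Fin n), ‖v‖ ≤ Real.sqrt n → ‖T v‖ ≤ 1 := by
    intro v hv
    have h1 : ‖T v‖ = 2 * ‖(P - Q) v‖ := by
      rw [hT]; simp [norm_smul]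
    have h2 : ‖(P - Q) v‖ ≤ (1/(2*Real.sqrt n)) * Real.sqrt n :=
      le_trans ((P - Q).le_opNorm v) (mul_le_mul hPQ hv (norm_nonneg v) (by positivity))
    rw [h1]
    calc 2 * ‖(P - Q) v‖ ≤ 2 * ((1/(2*Real.sqrt n)) * Real.sqrt n) := by linarith
      _ = 1 := by field_simp
  have hyK : ∀ m, y m ∈ K ∧ ‖y m‖ ≤ Real.sqrt n := by
    intro m
    induction m with
    | zero => exact ⟨hxK, by simpa [hy0] using mem_closedBall_zero_iff.mp (hKJohn₂ hxK)⟩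
    | succ m ih =>
      have h1 : ‖y (m+1)‖ ≤ 1 := by rw [hysucc]; exact hTle _ ih.2
      exact ⟨hKJohn₁ (mem_closedBall_zero_iff.mpr h1), h1.trans hsn1⟩
  have hkey : ∀ m, P (y m) = (P ∘L Q) (y m) + ((2:ℝ)⁻¹) • P (y (m+1)) := by
    intro m
    have hPP : P (P (y m)) = P (y m) := by
      have := ContinuousLinearMap.ext_iff.mp hPproj (y m)
      simpa using this
    rw [hysucc]
    have hTv : T (y m) = (2:ℝ) • (P (y m) - Q (y m)) := by simp [hT]
    rw [hTv, ContinuousLinearMap.map_smul, map_sub]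
    simp only [ContinuousLinearMap.comp_apply]
    rw [hPP]
    module
  have hpartial : ∀ N, P x = (∑ m ∈ Finset.range N, ((2:ℝ)⁻¹)^m • (P ∘L Q) (y m))
      + ((2:ℝ)⁻¹)^N • P (y N) := by
    intro N
    induction N with
    | zero => simp [hy0]
    | succ N ih =>
      rw [ih, hkey N, Finset.sum_range_succ]
      rw [smul_add, smul_smul, ← pow_succ]
      abel
  -- summability of the series defining w
  have hgeo : Summable (fun m : ℕ => ((2:ℝ)⁻¹)^m) :=
    summable_geometric_of_lt_one (by norm_num) (by norm_num)
  have hsummA : Summable (fun m => ((2:ℝ)⁻¹)^(m+1) • y m) := by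
    apply Summable.of_norm_bounded (g := fun m => ((2:ℝ)⁻¹)^(m+1) * Real.sqrt n)
    · have : Summable (fun m : ℕ => (2:ℝ)⁻¹ * (((2:ℝ)⁻¹)^m * Real.sqrt n)) :=
        ((hgeo.mul_right (Real.sqrt n)).mul_left _)
      simpa [pow_succ, mul_comm, mul_assoc, mul_left_comm] using this
    · intro m
      rw [norm_smul]
      have : ‖((2:ℝ)⁻¹)^(m+1)‖ = ((2:ℝ)⁻¹)^(m+1) := by
        rw [Real.norm_eq_abs, abs_of_nonneg (by positivity)]
      rw [this]
      exact mul_le_mul_of_nonneg_left (hyK m).2 (by positivity)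
  set w : EuclideanSpace ℝ (Fin n) := ∑' m, ((2:ℝ)⁻¹)^(m+1) • y m with hw
  -- w ∈ K
  have main : ∀ N, ∀ c ∈ K,
      (∑ m ∈ Finset.range N, ((2:ℝ)⁻¹)^(m+1) • y m) + ((2:ℝ)⁻¹)^N • c ∈ K := by
    intro N
    induction N with
    | zero => intro c hc; simpa using hc
    | succ N ih =>
      intro c hc
      have hmem : ((2:ℝ)⁻¹) • y N + ((2:ℝ)⁻¹) • c ∈ K :=
        hKconv (hyK N).1 hc (by norm_num) (by norm_num) (by norm_num)
      have h2 := ih _ hmem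
      have heq : (∑ m ∈ Finset.range (N+1), ((2:ℝ)⁻¹)^(m+1) • y m)
          + ((2:ℝ)⁻¹)^(N+1) • c
          = (∑ m ∈ Finset.range N, ((2:ℝ)⁻¹)^(m+1) • y m)
          + ((2:ℝ)⁻¹)^N • (((2:ℝ)⁻¹) • y N + ((2:ℝ)⁻¹) • c) := by
        rw [Finset.sum_range_succ, smul_add, smul_smul, smul_smul, ← pow_succ]
        abel
      rw [heq]
      exact h2
  have hSK : ∀ N, (∑ m ∈ Finset.range N, ((2:ℝ)⁻¹)^(m+1) • y m) ∈ K := by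
    intro N
    have := main N 0 h0K
    simpa using this
  have hwK : w ∈ K :=
    hKcomp.isClosed.mem_of_tendsto hsummA.hasSum.tendsto_sum_nat
      (Filter.Eventually.of_forall hSK)
  -- the series f sums to P x
  set f : ℕ → EuclideanSpace ℝ (Fin n) := fun m => ((2:ℝ)⁻¹)^m • (P ∘L Q) (y m) with hf
  have hsummf : Summable f := by
    apply Summable.of_norm_bounded (g := fun m => ((2:ℝ)⁻¹)^m * (‖P ∘L Q‖ * Real.sqrt n))
    · exact hgeo.mul_right _
    · intro m
      rw [hf, norm_smul]
      have h1 : ‖((2:ℝ)⁻¹)^m‖ = ((2:ℝ)⁻¹)^m := by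
        rw [Real.norm_eq_abs, abs_of_nonneg (by positivity)]
      rw [h1]
      refine mul_le_mul_of_nonneg_left ?_ (by positivity)
      exact le_trans ((P ∘L Q).le_opNorm _)
        (mul_le_mul_of_nonneg_left (hyK m).2 (norm_nonneg _))
  have htend0 : Filter.Tendsto (fun N => ((2:ℝ)⁻¹)^N • P (y N)) Filter.atTop
      (nhds 0) := by
    apply squeeze_zero_norm (a := fun N => ((2:ℝ)⁻¹)^N * (‖P‖ * Real.sqrt n))
    · intro N
      rw [norm_smul]
      have h1 : ‖((2:ℝ)⁻¹)^N‖ = ((2:ℝ)⁻¹)^N := by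
        rw [Real.norm_eq_abs, abs_of_nonneg (by positivity)]
      rw [h1]
      refine mul_le_mul_of_nonneg_left ?_ (by positivity)
      exact le_trans (P.le_opNorm _)
        (mul_le_mul_of_nonneg_left (hyK N).2 (norm_nonneg _))
    · have := tendsto_pow_atTop_nhds_zero_of_lt_one (by norm_num : (0:ℝ) ≤ 2⁻¹)
        (by norm_num : (2:ℝ)⁻¹ < 1)
      have h2 := this.mul_const (‖P‖ * Real.sqrt n)
      rw [zero_mul] at h2
      exact h2
  have htend1 : Filter.Tendsto (fun N => ∑ m ∈ Finset.range N, f m) Filter.atTop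
      (nhds (P x)) := by
    have heq : (fun N => ∑ m ∈ Finset.range N, f m)
        = fun N => P x - ((2:ℝ)⁻¹)^N • P (y N) := by
      funext N
      have := hpartial N
      rw [hf]
      rw [eq_sub_iff_add_eq]
      exact this.symm
    rw [heq]
    simpa using Filter.Tendsto.sub (tendsto_const_nhds (x := P x)) htend0
  have htsum : ∑' m, f m = P x :=
    tendsto_nhds_unique hsummf.hasSum.tendsto_sum_nat htend1
  have hmapw : (P ∘L Q) w = (2:ℝ)⁻¹ • P x := by
    rw [hw, ContinuousLinearMap.map_tsum _ hsummA]
    have heq : (fun m => (P ∘L Q) (((2:ℝ)⁻¹)^(m+1) • y m)) = fun m => (2:ℝ)⁻¹ • f m := by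
      funext m
      rw [ContinuousLinearMap.map_smul, hf, smul_smul, pow_succ, mul_comm]
    rw [heq, tsum_const_smul'' ((2:ℝ)⁻¹), htsum]
  have hfinal : P x = (2:ℝ) • (P ∘L Q) w := by
    rw [hmapw, smul_smul]
    norm_num
  rw [hfinal]
  exact Set.smul_mem_smul_set (Set.mem_image_of_mem _ hwK)
end

section
/- Let w₁,…,w_N ∈ ℝⁿ with ‖wᵢ‖₂ ≤ 1 for all i and N ≥ n. Then |absconv{w₁,…,w_N}|^{1/n} ≤ C √(log(2N/n)) / n for some absolute constant C > 0. -/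
open MeasureTheory Real Pointwise Finset
open scoped ENNReal

lemma pow_le_factorial_mul_exp (k : ℕ) : (k:ℝ)^k ≤ (k.factorial : ℝ) * Real.exp k := by
  induction k with
  | zero => simp
  | succ k ih =>
    rcases Nat.eq_zero_or_pos k with hk | hk
    · subst hk
      simpa using Real.one_le_exp (by norm_num : (0:ℝ) ≤ 1)
    · have hk0 : (0:ℝ) < k := by exact_mod_cast hk
      have h2 : (1 + 1/(k:ℝ)) ≤ Real.exp (1/k) := by
        have := Real.add_one_le_exp (1/(k:ℝ)); linarith
      have h3 : (1+1/(k:ℝ))^k ≤ Real.exp (1/(k:ℝ)) ^ k :=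
        pow_le_pow_left₀ (by positivity) h2 k
      rw [← Real.exp_nat_mul] at h3
      rw [show (k:ℝ) * (1/k) = 1 by field_simp] at h3
      have h1 : ((k:ℝ)+1)^k ≤ (k:ℝ)^k * Real.exp 1 := by
        have : ((k:ℝ)+1) = k * (1 + 1/k) := by field_simp
        rw [this, mul_pow]
        exact mul_le_mul_of_nonneg_left h3 (by positivity)
      have hexp : Real.exp ((k:ℕ) + 1 : ℕ) = Real.exp k * Real.exp 1 := by
        push_cast; rw [← Real.exp_add]
      calc ((k+1:ℕ):ℝ)^(k+1) = ((k:ℝ)+1) * ((k:ℝ)+1)^k := by push_cast; ring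
        _ ≤ ((k:ℝ)+1) * ((k:ℝ)^k * Real.exp 1) := by
            apply mul_le_mul_of_nonneg_left h1 (by positivity)
        _ ≤ ((k:ℝ)+1) * ((k.factorial : ℝ) * Real.exp k * Real.exp 1) := by
            apply mul_le_mul_of_nonneg_left (mul_le_mul_of_nonneg_right ih (Real.exp_pos 1).le)
              (by positivity)
        _ = ((k+1:ℕ).factorial : ℝ) * Real.exp ((k+1:ℕ):ℝ) := by
            rw [Nat.factorial_succ, hexp]; push_cast; ring

lemma choose_le_exp_pow {a k : ℕ} (hk : 0 < k) :
    ((a.choose k : ℕ) : ℝ) ≤ ((a:ℝ) * Real.exp 1 / k) ^ k := by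
  have h1 : a.choose k * k.factorial ≤ a ^ k := by
    calc a.choose k * k.factorial = k.factorial * a.choose k := Nat.mul_comm _ _
      _ = a.descFactorial k := (Nat.descFactorial_eq_factorial_mul_choose a k).symm
      _ ≤ a ^ k := Nat.descFactorial_le_pow a k
  have h1R : ((a.choose k : ℕ):ℝ) * (k.factorial:ℝ) ≤ (a:ℝ)^k := by exact_mod_cast h1
  have hkf : (0:ℝ) < (k.factorial:ℝ) := by exact_mod_cast k.factorial_pos
  have hkR : (0:ℝ) < (k:ℝ) := by exact_mod_cast hk
  have hkk : (0:ℝ) < (k:ℝ)^k := by positivity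
  have h2 := pow_le_factorial_mul_exp k
  have hek : Real.exp 1 ^ k = Real.exp k := by rw [← Real.exp_nat_mul]; norm_num
  rw [div_pow, mul_pow, hek, le_div_iff₀ hkk]
  have ha : (0:ℝ) ≤ (a:ℝ)^k := by positivity
  have hc : (0:ℝ) ≤ ((a.choose k : ℕ):ℝ) := by positivity
  nlinarith [Real.exp_pos (k:ℝ)]

lemma volume_closedBall_le (n : ℕ) (hn : 0 < n) {r : ℝ} (hr : 0 < r) :
    volume (Metric.closedBall (0 : EuclideanSpace ℝ (Fin n)) r) ≤
      ENNReal.ofReal ((r * Real.sqrt (2 * π * Real.exp 1 / n)) ^ n) := by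
  classical
  have hφ := EuclideanSpace.volume_preserving_symm_measurableEquiv_toLp (Fin n)
  set φ := (MeasurableEquiv.toLp 2 (Fin n → ℝ)).symm with hφdef
  have hnR : (0:ℝ) < n := by exact_mod_cast hn
  set b : ℝ := n / (2 * r ^ 2) with hb
  have hbpos : 0 < b := by positivity
  set g : (Fin n → ℝ) → ℝ :=
    fun x => Real.exp ((n:ℝ) * (1/2)) * ∏ j, Real.exp (-b * x j ^ 2) with hg
  have hgi : Integrable g := by
    apply Integrable.const_mul
    exact Integrable.fintype_prod (f := fun (_ : Fin n) (t:ℝ) => Real.exp (-b * t^2))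
      (fun i => integrable_exp_neg_mul_sq hbpos)
  set A : Set (Fin n → ℝ) := φ.symm ⁻¹' (Metric.closedBall 0 r) with hA
  have hvol : volume (Metric.closedBall (0 : EuclideanSpace ℝ (Fin n)) r) = volume A :=
    ((MeasurePreserving.symm _ hφ).measure_preimage measurableSet_closedBall.nullMeasurableSet).symm
  have hAmeas : MeasurableSet A :=
    φ.symm.measurable measurableSet_closedBall
  have hpt : ∀ x ∈ A, (1:ℝ) ≤ g x := by
    intro x hx
    have hx' : φ.symm x ∈ Metric.closedBall (0 : EuclideanSpace ℝ (Fin n)) r := hx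
    have hnorm : ‖φ.symm x‖ ≤ r := by
      simpa [dist_zero_right] using hx'
    have hsum : ∑ j, x j ^ 2 ≤ r ^ 2 := by
      have h1 : ‖φ.symm x‖ = Real.sqrt (∑ j, x j ^ 2) := by
        rw [EuclideanSpace.norm_eq]
        congr 1
        refine Finset.sum_congr rfl fun j _ => ?_
        have : (φ.symm x) j = x j := rfl
        rw [this, Real.norm_eq_abs, sq_abs]
      have hS : (0:ℝ) ≤ ∑ j, x j ^ 2 := by positivity
      have h5 : Real.sqrt (∑ j, x j ^ 2) ≤ r := h1 ▸ hnorm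
      nlinarith [Real.sq_sqrt hS, Real.sqrt_nonneg (∑ j, x j ^ 2)]
    have : ∏ j, Real.exp (-b * x j ^ 2) = Real.exp (∑ j, -b * x j ^ 2) := by
      rw [Real.exp_sum]
    rw [hg]; simp only []
    rw [this, ← Real.exp_add]
    apply Real.one_le_exp
    have : ∑ j, -b * x j ^ 2 = -b * ∑ j, x j ^ 2 := by rw [← Finset.mul_sum]
    rw [this]
    have hble : b * (∑ j, x j ^ 2) ≤ b * r ^ 2 := by
      apply mul_le_mul_of_nonneg_left hsum hbpos.le
    have : b * r ^ 2 = (n:ℝ) * (1/2) := by rw [hb]; field_simp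
    nlinarith
  have hbound : volume A ≤ ENNReal.ofReal (∫ x, g x) := by
    have h1 : volume A = ∫⁻ x in A, 1 := by simp
    rw [h1, ofReal_integral_eq_lintegral_ofReal hgi
      (Filter.Eventually.of_forall fun x => by positivity)]
    calc ∫⁻ x in A, 1 ≤ ∫⁻ x in A, ENNReal.ofReal (g x) := by
          apply setLIntegral_mono (by fun_prop) (fun x hx => by
            simpa using ENNReal.one_le_ofReal.2 (hpt x hx))
      _ ≤ ∫⁻ x, ENNReal.ofReal (g x) := setLIntegral_le_lintegral _ _
  have hint : ∫ x, g x = (r * Real.sqrt (2 * π * Real.exp 1 / n)) ^ n := by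
    rw [hg]
    simp only []
    rw [MeasureTheory.integral_const_mul]
    rw [integral_fintype_prod_volume_eq_pow (ι := Fin n) (fun t : ℝ => Real.exp (-b * t^2))]
    rw [integral_gaussian b]
    rw [Fintype.card_fin]
    have h1 : π / b = r^2 * (2*π/n) := by rw [hb]; field_simp
    have h2 : Real.sqrt (π / b) = r * Real.sqrt (2*π/n) := by
      rw [h1, Real.sqrt_mul (by positivity), Real.sqrt_sq hr.le]
    have h3 : Real.exp ((n:ℝ) * (1/2)) = Real.exp (1/2) ^ n := by
      rw [← Real.exp_nat_mul]
    have h4 : Real.exp (1/2) = Real.sqrt (Real.exp 1) := Real.exp_half 1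
    rw [h2, h3, h4, ← mul_pow]
    congr 1
    rw [← mul_assoc, mul_comm (Real.sqrt (Real.exp 1)) r, mul_assoc]
    congr 1
    rw [← Real.sqrt_mul (Real.exp_pos 1).le]
    congr 1
    ring
  rw [hvol, ← hint]
  exact hbound

variable {F : Type*} [NormedAddCommGroup F] [InnerProductSpace ℝ F]

local notation "⟪" x ", " y "⟫" => @inner ℝ _ _ x y

lemma sum_prod_lam {m : ℕ} (lam : Fin m → ℝ) (hs : ∑ i, lam i = 1) (k : ℕ) :
    ∑ f : Fin k → Fin m, ∏ ℓ, lam (f ℓ) = 1 := by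
  induction k with
  | zero =>
    rw [Fintype.sum_eq_single (fun i : Fin 0 => i.elim0)]
    · simp
    · intro f hf; exact absurd (funext fun i => i.elim0) hf
  | succ k ih =>
    rw [← Equiv.sum_comp (Fin.consEquiv (fun _ => Fin m))
      (fun f : Fin (k+1) → Fin m => ∏ ℓ, lam (f ℓ)), Fintype.sum_prod_type]
    simp only [Fin.consEquiv_apply, Fin.prod_univ_succ, Fin.cons_zero, Fin.cons_succ]
    rw [← Finset.sum_mul_sum]
    rw [hs, ih, one_mul]

lemma maurey_identity {m : ℕ} (u : Fin m → F) (lam : Fin m → ℝ)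
    (hs : ∑ i, lam i = 1) (k : ℕ) :
    ∑ f : Fin k → Fin m, (∏ ℓ, lam (f ℓ)) *
        ‖(k:ℝ) • (∑ i, lam i • u i) - ∑ ℓ, u (f ℓ)‖ ^ 2
      = k * (∑ i, lam i * ‖u i‖^2 - ‖∑ i, lam i • u i‖^2) := by
  set x := ∑ i, lam i • u i with hx
  set V := ∑ i, lam i * ‖u i‖^2 - ‖x‖^2 with hVdef
  have hx0 : ∑ i, lam i • (x - u i) = 0 := by
    simp only [smul_sub]
    rw [Finset.sum_sub_distrib, ← Finset.sum_smul, hs, one_smul, ← hx, sub_self]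
  have hV : ∑ i, lam i * ‖x - u i‖^2 = V := by
    have hterm : ∀ i : Fin m, lam i * ‖x - u i‖^2
        = lam i * ‖x‖^2 - 2 * (lam i * ⟪x, u i⟫) + lam i * ‖u i‖^2 := fun i => by
      rw [norm_sub_sq_real]; ring
    rw [Finset.sum_congr rfl (fun i _ => hterm i), Finset.sum_add_distrib,
      Finset.sum_sub_distrib, ← Finset.sum_mul, hs, one_mul, ← Finset.mul_sum]
    have h2 : ∑ i, lam i * ⟪x, u i⟫ = ‖x‖^2 := by
      simp_rw [← real_inner_smul_right]
      rw [← inner_sum, ← hx]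
      exact real_inner_self_eq_norm_sq x
    rw [h2, hVdef]; ring
  induction k with
  | zero =>
    simp
  | succ k ih =>
    rw [← Equiv.sum_comp (Fin.consEquiv (fun _ => Fin m)), Fintype.sum_prod_type]
    simp only [Fin.consEquiv_apply, Fin.prod_univ_succ, Fin.sum_univ_succ,
      Fin.cons_zero, Fin.cons_succ]
    have hvec : ∀ (i : Fin m) (g : Fin k → Fin m),
        ((k+1:ℕ):ℝ) • x - (u i + ∑ ℓ, u (g ℓ))
          = ((k:ℝ) • x - ∑ ℓ, u (g ℓ)) + (x - u i) := by
      intro i g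
      push_cast
      rw [add_smul, one_smul]
      abel
    have hsummand : ∀ (i : Fin m) (g : Fin k → Fin m),
        (lam i * ∏ ℓ, lam (g ℓ)) * ‖((k+1:ℕ):ℝ) • x - (u i + ∑ ℓ, u (g ℓ))‖^2
          = lam i * ((∏ ℓ, lam (g ℓ)) * ‖(k:ℝ) • x - ∑ ℓ, u (g ℓ)‖^2)
            + (2 * ((∏ ℓ, lam (g ℓ)) * ⟪(k:ℝ) • x - ∑ ℓ, u (g ℓ), lam i • (x - u i)⟫)
              + (lam i * ‖x - u i‖^2) * (∏ ℓ, lam (g ℓ))) := by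
      intro i g
      rw [hvec i g, norm_add_sq_real, real_inner_smul_right]
      ring
    rw [Finset.sum_congr rfl (fun i _ => Finset.sum_congr rfl (fun g _ => hsummand i g))]
    simp only [Finset.sum_add_distrib]
    rw [← Finset.sum_mul_sum (f := lam)
      (g := fun g : Fin k → Fin m => (∏ ℓ, lam (g ℓ)) * ‖(k:ℝ) • x - ∑ ℓ, u (g ℓ)‖^2)]
    rw [hs, ih, one_mul]
    have hT2 : ∑ i, ∑ g : Fin k → Fin m,
        2 * ((∏ ℓ, lam (g ℓ)) * ⟪(k:ℝ) • x - ∑ ℓ, u (g ℓ), lam i • (x - u i)⟫) = 0 := by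
      rw [Finset.sum_comm]
      apply Finset.sum_eq_zero
      intro g _
      rw [← Finset.mul_sum, ← Finset.mul_sum, ← inner_sum, hx0, inner_zero_right]
      ring
    rw [hT2]
    rw [← Finset.sum_mul_sum (f := fun i => lam i * ‖x - u i‖^2)
      (g := fun g : Fin k → Fin m => ∏ ℓ, lam (g ℓ))]
    rw [hV, sum_prod_lam lam hs k, mul_one]
    push_cast
    ring

lemma exists_good {m : ℕ} (k : ℕ) (u : Fin m → F) (hu : ∀ i, ‖u i‖ ≤ 1)
    (lam : Fin m → ℝ) (h0 : ∀ i, 0 ≤ lam i) (hs : ∑ i, lam i = 1) :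
    ∃ f : Fin k → Fin m,
      ‖(k:ℝ) • (∑ i, lam i • u i) - ∑ ℓ, u (f ℓ)‖ ^ 2 ≤ k := by
  rcases Nat.eq_zero_or_pos k with hk | hk
  · subst hk
    exact ⟨fun i => i.elim0, by simp⟩
  set x := ∑ i, lam i • u i with hx
  set V := ∑ i, lam i * ‖u i‖^2 - ‖x‖^2 with hVdef
  have hV1 : V ≤ 1 := by
    have h1 : ∑ i, lam i * ‖u i‖^2 ≤ ∑ i, lam i := by
      apply Finset.sum_le_sum
      intro i _
      have h2 : ‖u i‖^2 ≤ 1 := by nlinarith [hu i, norm_nonneg (u i)]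
      calc lam i * ‖u i‖^2 ≤ lam i * 1 := mul_le_mul_of_nonneg_left h2 (h0 i)
        _ = lam i := mul_one _
    rw [hVdef]
    nlinarith [sq_nonneg ‖x‖, hs]
  by_contra hcon
  push_neg at hcon
  have hQ := maurey_identity u lam hs k
  set P : (Fin k → Fin m) → ℝ := fun f => ∏ ℓ, lam (f ℓ) with hP
  set val : (Fin k → Fin m) → ℝ := fun f => ‖(k:ℝ) • x - ∑ ℓ, u (f ℓ)‖^2 with hval
  have hQ' : ∑ f, P f * val f = (k:ℝ) * V := hQ
  have hcon' : ∀ f, (k:ℝ) < val f := hcon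
  have hPn : ∀ f, 0 ≤ P f := fun f => Finset.prod_nonneg fun ℓ _ => h0 (f ℓ)
  have hPs : ∑ f, P f = 1 := sum_prod_lam lam hs k
  obtain ⟨f₀, hf₀⟩ : ∃ f₀, P f₀ ≠ 0 := by
    by_contra hall
    push_neg at hall
    rw [Finset.sum_eq_zero (fun f _ => hall f)] at hPs
    norm_num at hPs
  have hf₀pos : 0 < P f₀ := lt_of_le_of_ne (hPn f₀) (Ne.symm hf₀)
  have hstrict : (0:ℝ) < P f₀ * (val f₀ - k) := by
    have := hcon' f₀
    nlinarith
  have hsumge : P f₀ * (val f₀ - k) ≤ ∑ f, P f * (val f - k) := by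
    apply Finset.single_le_sum (f := fun f => P f * (val f - k))
    · intro f _
      have := hcon' f
      nlinarith [hPn f]
    · exact Finset.mem_univ f₀
  have hsum : ∑ f, P f * (val f - k) = k * V - k := by
    have : ∑ f, P f * (val f - k) = (∑ f, P f * val f) - (∑ f, P f) * (k:ℝ) := by
      rw [Finset.sum_mul, ← Finset.sum_sub_distrib]
      exact Finset.sum_congr rfl fun f _ => by ring
    rw [this, hPs, hQ', one_mul]
  have hkR : (0:ℝ) < k := by exact_mod_cast hk
  nlinarith [hsumge, hsum, hstrict]

lemma maurey_cover {m k : ℕ} (hk : 0 < k) (u : Fin m → F) (hu : ∀ i, ‖u i‖ ≤ 1) :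
    convexHull ℝ (Set.range u) ⊆
      ⋃ c : Sym (Fin m) k,
        Metric.closedBall ((k:ℝ)⁻¹ • (Multiset.map u (c : Multiset (Fin m))).sum)
          (Real.sqrt (1/k)) := by
  classical
  intro x hx
  rw [_root_.convexHull_eq] at hx
  obtain ⟨ι, t, wgt, z, hw0, hw1, hz, rfl⟩ := hx
  have htne : t.Nonempty := by
    by_contra hemp
    rw [Finset.not_nonempty_iff_eq_empty] at hemp
    subst hemp
    simp at hw1
  have hm : 0 < m := by
    obtain ⟨i0, hi0⟩ := htne
    obtain ⟨j, -⟩ := hz i0 hi0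
    exact j.pos
  have hgex : ∀ i : ι, ∃ j : Fin m, i ∈ t → u j = z i := by
    intro i
    by_cases hi : i ∈ t
    · obtain ⟨j, hj⟩ := hz i hi
      exact ⟨j, fun _ => hj⟩
    · exact ⟨⟨0, hm⟩, fun h => absurd h hi⟩
  choose g hg using hgex
  set lam : Fin m → ℝ := fun j => ∑ i ∈ t.filter (fun i => g i = j), wgt i with hlam
  have h0 : ∀ j, 0 ≤ lam j := by
    intro j
    apply Finset.sum_nonneg
    intro i hi
    exact hw0 i (Finset.mem_filter.1 hi).1
  have hsum : ∑ j, lam j = 1 := by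
    rw [hlam]
    rw [Finset.sum_fiberwise_of_maps_to (fun i _ => Finset.mem_univ (g i)) wgt]
    exact hw1
  have hxeq : ∑ j, lam j • u j = t.centerMass wgt z := by
    rw [Finset.centerMass_eq_of_sum_1 _ _ hw1]
    rw [hlam]
    simp only [Finset.sum_smul]
    rw [← Finset.sum_fiberwise_of_maps_to (fun i _ => Finset.mem_univ (g i))
      (fun i => wgt i • z i)]
    apply Finset.sum_congr rfl
    intro j _
    apply Finset.sum_congr rfl
    intro i hi
    obtain ⟨hit, hgi⟩ := Finset.mem_filter.1 hi
    rw [← hg i hit, hgi]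
  obtain ⟨f, hf⟩ := exists_good k u hu lam h0 hsum
  rw [hxeq] at hf
  set c : Sym (Fin m) k := ⟨Multiset.map f Finset.univ.val, by simp⟩ with hc
  apply Set.mem_iUnion.2 ⟨c, ?_⟩
  have hTc : (Multiset.map u (c : Multiset (Fin m))).sum = ∑ ℓ, u (f ℓ) := by
    show (Multiset.map u (Multiset.map f Finset.univ.val)).sum = _
    rw [Multiset.map_map]
    rfl
  rw [Metric.mem_closedBall, dist_eq_norm, hTc]
  have hkR : (0:ℝ) < k := by exact_mod_cast hk
  have hveq : t.centerMass wgt z - (k:ℝ)⁻¹ • (∑ ℓ, u (f ℓ))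
      = (k:ℝ)⁻¹ • ((k:ℝ) • t.centerMass wgt z - ∑ ℓ, u (f ℓ)) := by
    rw [smul_sub, smul_smul, inv_mul_cancel₀ (ne_of_gt hkR), one_smul]
  rw [hveq, norm_smul, Real.norm_eq_abs, abs_of_pos (by positivity)]
  have hnle : ‖(k:ℝ) • t.centerMass wgt z - ∑ ℓ, u (f ℓ)‖ ≤ Real.sqrt k := by
    have h1 := Real.sqrt_le_sqrt hf
    rwa [Real.sqrt_sq (norm_nonneg _)] at h1
  have hsqp : 0 < Real.sqrt k := Real.sqrt_pos.2 hkR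
  have hsq : Real.sqrt k * Real.sqrt k = (k:ℝ) := Real.mul_self_sqrt hkR.le
  calc (k:ℝ)⁻¹ * ‖(k:ℝ) • t.centerMass wgt z - ∑ ℓ, u (f ℓ)‖
      ≤ (k:ℝ)⁻¹ * Real.sqrt k := by
        apply mul_le_mul_of_nonneg_left hnle (by positivity)
    _ = Real.sqrt (1/k) := by
        rw [one_div, Real.sqrt_inv]
        field_simp
        exact Real.sq_sqrt hkR.le


set_option maxHeartbeats 2000000 in
lemma caseB_real (n N k : ℕ) (hnR : (0:ℝ) < n) (hNn : (n:ℝ) ≤ N) (hk_pos : 0 < k)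
    (L : ℝ) (hLpos : 0 < L) (hexpL : Real.exp L = 2*N/n)
    (hk_lb : (n:ℝ)/L ≤ k) (hk_ub : (k:ℝ) ≤ n/L + 1) (hcase : 4*L < n) :
    ((Fintype.card (Sym (Fin (2*N)) k) : ℕ) : ℝ)
      * (Real.sqrt (1/(k:ℝ)) * Real.sqrt (2*Real.pi*Real.exp 1/(n:ℝ)))^n
      ≤ (10^6 * Real.sqrt L / n)^n := by
  have hkR : (0:ℝ) < k := by exact_mod_cast hk_pos
  have hnkL : (n:ℝ) ≤ k * L := (div_le_iff₀ hLpos).1 hk_lb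
  have he1 : Real.exp 1 ≤ 2.7182818286 := Real.exp_one_lt_d9.le
  have h25 : 2*Real.pi*Real.exp 1 ≤ 25 := by
    nlinarith [Real.pi_le_four, Real.pi_pos, Real.exp_pos 1]
  have hsqrtn : (0:ℝ) < Real.sqrt n := Real.sqrt_pos.2 hnR
  have h2Nn : (2:ℝ) ≤ 2*N/n := by
    rw [le_div_iff₀ hnR]; nlinarith
  have hsq25 : Real.sqrt (2*Real.pi*Real.exp 1/(n:ℝ)) ≤ 5 / Real.sqrt n := by
    have h1 : 2*Real.pi*Real.exp 1/(n:ℝ) ≤ 25/(n:ℝ) := by gcongr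
    calc Real.sqrt (2*Real.pi*Real.exp 1/(n:ℝ)) ≤ Real.sqrt (25/(n:ℝ)) := Real.sqrt_le_sqrt h1
      _ = 5 / Real.sqrt n := by
          rw [Real.sqrt_div (by norm_num : (0:ℝ) ≤ 25)]
          congr 1
          rw [show (25:ℝ) = 5^2 by norm_num, Real.sqrt_sq (by norm_num)]
  have hcard_le : ((Fintype.card (Sym (Fin (2*N)) k) : ℕ) : ℝ) ≤ Real.exp 10 ^ n := by
    have hc1 : Fintype.card (Sym (Fin (2*N)) k) = (2*N + k - 1).choose k := by
      rw [Sym.card_sym_eq_multichoose, Fintype.card_fin, Nat.multichoose_eq]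
    rw [hc1]
    clear hc1
    have hc2 := choose_le_exp_pow (a := 2*N + k - 1) hk_pos
    set X := (2:ℝ)*N/n with hX
    have hX2 : (2:ℝ) ≤ X := h2Nn
    have hc3 : ((2*N + k - 1 : ℕ):ℝ) * Real.exp 1 / k ≤ X^5 := by
      have ha1 : ((2*N + k - 1 : ℕ):ℝ) ≤ 2*N + k := by
        have : (2*N + k - 1 : ℕ) ≤ 2*N + k := by omega
        calc ((2*N + k - 1 : ℕ):ℝ) ≤ ((2*N + k : ℕ):ℝ) := by exact_mod_cast this
          _ = 2*N + k := by push_cast; ring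
      have ha2 : ((2*N:ℝ) + k) * Real.exp 1 / k = (2*N/k + 1) * Real.exp 1 := by
        field_simp
      have ha3 : (2*N:ℝ)/k ≤ X * L := by
        have h1k : (1:ℝ)/k ≤ L/n := by
          rw [div_le_div_iff₀ hkR hnR]
          nlinarith
        calc (2*N:ℝ)/k = 2*N * (1/k) := by ring
          _ ≤ 2*N * (L/n) := by
              apply mul_le_mul_of_nonneg_left h1k (by positivity)
          _ = X * L := by rw [hX]; ring
      have hLX : L ≤ X := by
        rw [← hexpL]
        nlinarith [Real.add_one_le_exp L]
      have ha4 : (2*N:ℝ)/k + 1 ≤ X^2 + 1 := by nlinarith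
      have hX1 : (1:ℝ) ≤ X^2 := by nlinarith
      have h8 : (8:ℝ) ≤ X^3 := by nlinarith
      have ha5 : (X^2 + 1) * Real.exp 1 ≤ X^5 := by
        calc (X^2+1) * Real.exp 1 ≤ (X^2 + X^2) * 2.7182818286 := by
              nlinarith [Real.exp_pos 1]
          _ ≤ 8 * X^2 := by nlinarith
          _ ≤ X^3 * X^2 := by nlinarith
          _ = X^5 := by ring
      calc ((2*N + k - 1 : ℕ):ℝ) * Real.exp 1 / k
          ≤ ((2*N:ℝ) + k) * Real.exp 1 / k := by
            gcongr
        _ = (2*N/k + 1) * Real.exp 1 := ha2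
        _ ≤ (X^2 + 1) * Real.exp 1 := by nlinarith [Real.exp_pos 1]
        _ ≤ X^5 := ha5
    have hc4 : (X^5 : ℝ)^k ≤ Real.exp 10 ^ n := by
      have hXpow : (X^5 : ℝ)^k = Real.exp (k * (5*L)) := by
        rw [← hexpL, ← pow_mul, ← Real.exp_nat_mul]
        congr 1
        push_cast; ring
      rw [hXpow, show Real.exp 10 ^ n = Real.exp (n * 10) by
        rw [← Real.exp_nat_mul]]
      apply Real.exp_le_exp.2
      have hkL : (k:ℝ) * L ≤ 2 * n := by
        calc (k:ℝ) * L ≤ (n/L + 1) * L := by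
              apply mul_le_mul_of_nonneg_right hk_ub hLpos.le
          _ = n + L := by field_simp
          _ ≤ n + n/4 := by nlinarith
          _ ≤ 2*n := by nlinarith
      nlinarith
    calc ((2*N + k - 1).choose k : ℝ) ≤ (((2*N + k - 1 : ℕ):ℝ) * Real.exp 1 / k)^k := hc2
      _ ≤ (X^5)^k := by
          apply pow_le_pow_left₀ (by positivity) hc3
      _ ≤ Real.exp 10 ^ n := hc4
  have hball : Real.sqrt (1/(k:ℝ)) * Real.sqrt (2*Real.pi*Real.exp 1/(n:ℝ)) ≤ 5 * Real.sqrt L / n := by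
    have h1 : Real.sqrt (1/(k:ℝ)) ≤ Real.sqrt (L/n) := by
      apply Real.sqrt_le_sqrt
      rw [div_le_div_iff₀ hkR hnR]
      nlinarith
    have hss : Real.sqrt n * Real.sqrt n = (n:ℝ) := Real.mul_self_sqrt hnR.le
    calc Real.sqrt (1/(k:ℝ)) * Real.sqrt (2*Real.pi*Real.exp 1/(n:ℝ))
        ≤ Real.sqrt (L/n) * (5 / Real.sqrt n) := by
          apply mul_le_mul h1 hsq25 (Real.sqrt_nonneg _) (Real.sqrt_nonneg _)
      _ = 5 * Real.sqrt L / n := by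
          rw [Real.sqrt_div hLpos.le, div_mul_div_comm, hss]
          ring
  have hD0 : (0:ℝ) ≤ 10^6 * Real.sqrt L / n := by positivity
  calc ((Fintype.card (Sym (Fin (2*N)) k) : ℕ) : ℝ)
        * (Real.sqrt (1/(k:ℝ)) * Real.sqrt (2*Real.pi*Real.exp 1/(n:ℝ)))^n
      ≤ Real.exp 10 ^ n * (5 * Real.sqrt L / n)^n := by
        apply mul_le_mul hcard_le (pow_le_pow_left₀ (by positivity) hball n)
          (by positivity) (by positivity)
    _ = (Real.exp 10 * (5 * Real.sqrt L / n))^n := by rw [mul_pow]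
    _ ≤ (10^6 * Real.sqrt L / n)^n := by
        apply pow_le_pow_left₀ (by positivity)
        have hexp10 : Real.exp 10 ≤ 25000 := by
          calc Real.exp 10 = Real.exp 1 ^ 10 := by
                rw [← Real.exp_nat_mul]; norm_num
            _ ≤ 2.7182818286^10 := by
                apply pow_le_pow_left₀ (Real.exp_pos 1).le he1
            _ ≤ 25000 := by norm_num
        have hLn : (0:ℝ) ≤ Real.sqrt L / n := by positivity
        calc Real.exp 10 * (5 * Real.sqrt L / n)
            = (5 * Real.exp 10) * (Real.sqrt L / n) := by ring
          _ ≤ (10^6) * (Real.sqrt L / n) := by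
              apply mul_le_mul_of_nonneg_right _ hLn
              nlinarith
          _ = 10^6 * Real.sqrt L / n := by ring

section Main

set_option maxHeartbeats 2000000 in
theorem absconv_volume_bound_log :
    ∃ C : ℝ, 0 < C ∧ ∀ (n N : ℕ), 0 < n → n ≤ N →
      ∀ w : Fin N → (Fin n → ℝ), (∀ i, Real.sqrt (∑ j, (w i j) ^ 2) ≤ 1) →
        (volume (convexHull ℝ (Set.range w ∪ -Set.range w))) ^ ((1 : ℝ) / n) ≤
          ENNReal.ofReal (C * Real.sqrt (Real.log (2 * N / n)) / n) := by
  classical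
  refine ⟨10^6, by norm_num, ?_⟩
  intro n N hn hnN w hw
  have hnR : (0:ℝ) < n := by exact_mod_cast hn
  have hNR : (0:ℝ) < N := by exact_mod_cast hn.trans_le hnN
  set L := Real.log (2 * N / n) with hLdef
  have h2Nn : (2:ℝ) ≤ 2 * N / n := by
    rw [le_div_iff₀ hnR]
    have : (n:ℝ) ≤ N := by exact_mod_cast hnN
    nlinarith
  have hL2 : Real.log 2 ≤ L := (Real.log_le_log_iff (by norm_num) (by positivity)).2 h2Nn
  have hlog2 : (0.6931471803 : ℝ) < Real.log 2 := Real.log_two_gt_d9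
  have hLpos : 0 < L := by linarith
  -- Euclidean picture
  set ψ := WithLp.linearEquiv 2 ℝ (Fin n → ℝ) with hψdef
  set w2 : Fin N → EuclideanSpace ℝ (Fin n) := fun i => ψ.symm (w i) with hw2def
  have hw2app : ∀ i j, w2 i j = w i j := fun i j => rfl
  have hwn : ∀ i, ‖w2 i‖ ≤ 1 := by
    intro i
    rw [EuclideanSpace.norm_eq]
    have : ∀ j, ‖w2 i j‖ ^ 2 = (w i j) ^ 2 := fun j => by
      rw [hw2app, Real.norm_eq_abs, sq_abs]
    rw [Finset.sum_congr rfl (fun j _ => this j)]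
    exact hw i
  set u : Fin (2*N) → EuclideanSpace ℝ (Fin n) := fun i =>
    if h : (i : ℕ) < N then w2 ⟨i, h⟩ else - w2 ⟨(i:ℕ) - N, by have := i.isLt; omega⟩ with hudef
  have hu : ∀ i, ‖u i‖ ≤ 1 := by
    intro i
    rw [hudef]
    dsimp only
    split
    · exact hwn _
    · rw [norm_neg]; exact hwn _
  set Spi : Set (Fin n → ℝ) := Set.range w ∪ -Set.range w with hSpi
  set Kpi := convexHull ℝ Spi with hKpi
  have hnegrange : -Set.range w = Set.range (fun i => -(w i)) := by
    ext x
    simp only [Set.mem_neg, Set.mem_range]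
    constructor
    · rintro ⟨i, hi⟩; exact ⟨i, by rw [hi, neg_neg]⟩
    · rintro ⟨i, hi⟩; exact ⟨i, by rw [← hi, neg_neg]⟩
  have hKpi_meas : MeasurableSet Kpi := by
    have hfin : Spi.Finite := by
      rw [hSpi, hnegrange]
      exact (Set.finite_range w).union (Set.finite_range _)
    exact (hfin.isCompact_convexHull ℝ).isClosed.measurableSet
  -- transfer volume
  have hKvol : volume Kpi
      = volume (⇑((MeasurableEquiv.toLp 2 (Fin n → ℝ)).symm) ⁻¹' Kpi) :=
    ((EuclideanSpace.volume_preserving_symm_measurableEquiv_toLp (Fin n)).measure_preimage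
      hKpi_meas.nullMeasurableSet).symm
  have hpre : ⇑((MeasurableEquiv.toLp 2 (Fin n → ℝ)).symm) ⁻¹' Kpi
      = convexHull ℝ (⇑ψ.symm '' Spi) := by
    have h1 : ⇑((MeasurableEquiv.toLp 2 (Fin n → ℝ)).symm) ⁻¹' Kpi = ⇑ψ.symm '' Kpi := by
      ext x
      constructor
      · intro hx; exact ⟨_, hx, rfl⟩
      · rintro ⟨y, hy, rfl⟩; exact hy
    rw [h1, hKpi]
    have := (ψ.symm.toLinearMap).image_convexHull Spi
    simpa using this
  have hS2 : ⇑ψ.symm '' Spi ⊆ Set.range u := by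
    rintro y ⟨p, hp, rfl⟩
    rcases hp with hp | hp
    · obtain ⟨i, rfl⟩ := hp
      refine ⟨⟨(i:ℕ), by have := i.isLt; omega⟩, ?_⟩
      rw [hudef]
      dsimp only
      rw [dif_pos i.2]
    · rw [Set.mem_neg] at hp
      obtain ⟨i, hi⟩ := hp
      refine ⟨⟨N + (i:ℕ), by have := i.isLt; omega⟩, ?_⟩
      rw [hudef]
      dsimp only
      rw [dif_neg (show ¬((⟨N + (i:ℕ), by have := i.isLt; omega⟩ : Fin (2*N)) : ℕ) < N by
        simp)]
      have h3 : p = -(w i) := by rw [hi, neg_neg]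
      subst h3
      rw [map_neg]
      congr 2
      simp
  have hsub2 : (⇑((MeasurableEquiv.toLp 2 (Fin n → ℝ)).symm) ⁻¹' Kpi)
      ⊆ convexHull ℝ (Set.range u) := by
    rw [hpre]; exact convexHull_mono hS2
  -- common numeric facts
  have he1 : Real.exp 1 ≤ 2.7182818286 := Real.exp_one_lt_d9.le
  have h25 : 2*π*Real.exp 1 ≤ 25 := by
    nlinarith [Real.pi_le_four, Real.pi_pos, Real.exp_pos 1]
  have hsqrtn : (0:ℝ) < Real.sqrt n := Real.sqrt_pos.2 hnR
  have hsq25 : Real.sqrt (2*π*Real.exp 1/(n:ℝ)) ≤ 5 / Real.sqrt n := by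
    have h1 : 2*π*Real.exp 1/(n:ℝ) ≤ 25/(n:ℝ) := by
      gcongr
    calc Real.sqrt (2*π*Real.exp 1/(n:ℝ)) ≤ Real.sqrt (25/(n:ℝ)) := Real.sqrt_le_sqrt h1
      _ = 5 / Real.sqrt n := by
          rw [Real.sqrt_div (by norm_num : (0:ℝ) ≤ 25)]
          congr 1
          rw [show (25:ℝ) = 5^2 by norm_num, Real.sqrt_sq (by norm_num)]
  set D : ℝ := 10^6 * Real.sqrt L / n with hD
  have hD0 : 0 ≤ D := by positivity
  -- main volume bound
  have hmain : volume (convexHull ℝ (Set.range u)) ≤ ENNReal.ofReal (D^n) := by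
    by_cases hcase : (n:ℝ) ≤ 4*L
    · -- small n : use unit ball
      have hsubball : convexHull ℝ (Set.range u) ⊆
          Metric.closedBall (0 : EuclideanSpace ℝ (Fin n)) 1 := by
        apply convexHull_min _ (convex_closedBall _ _)
        rintro p ⟨i, rfl⟩
        rw [Metric.mem_closedBall, dist_zero_right]
        exact hu i
      have hbase : (1:ℝ) * Real.sqrt (2*π*Real.exp 1/(n:ℝ)) ≤ D := by
        rw [one_mul]
        have hsqL : Real.sqrt n ≤ 2 * Real.sqrt L := by
          calc Real.sqrt n ≤ Real.sqrt (4*L) := Real.sqrt_le_sqrt hcase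
            _ = 2 * Real.sqrt L := by
                rw [show (4:ℝ)*L = 2^2*L by ring, Real.sqrt_mul (by positivity),
                  Real.sqrt_sq (by norm_num)]
        refine hsq25.trans ?_
        rw [hD, div_le_div_iff₀ hsqrtn hnR]
        have hnn : (n:ℝ) = Real.sqrt n * Real.sqrt n := (Real.mul_self_sqrt hnR.le).symm
        nlinarith [Real.sqrt_nonneg L, Real.sqrt_nonneg (n:ℝ)]
      calc volume (convexHull ℝ (Set.range u))
          ≤ volume (Metric.closedBall (0 : EuclideanSpace ℝ (Fin n)) 1) :=
            measure_mono hsubball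
        _ ≤ ENNReal.ofReal ((1 * Real.sqrt (2*π*Real.exp 1/(n:ℝ)))^n) :=
            volume_closedBall_le n hn one_pos
        _ ≤ ENNReal.ofReal (D^n) := by
            apply ENNReal.ofReal_le_ofReal
            exact pow_le_pow_left₀ (by positivity) hbase n
    · -- large n : Maurey covering
      push_neg at hcase
      set k := ⌈(n:ℝ)/L⌉₊ with hk
      have hk_lb : (n:ℝ)/L ≤ k := Nat.le_ceil _
      have hk_pos : 0 < k := by
        rw [hk, Nat.ceil_pos]; positivity
      have hkR : (0:ℝ) < k := by exact_mod_cast hk_pos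
      have hk_ub : (k:ℝ) ≤ n/L + 1 := (Nat.ceil_lt_add_one (by positivity)).le
      have hnkL : (n:ℝ) ≤ k * L := (div_le_iff₀ hLpos).1 hk_lb
      have hrpos : (0:ℝ) < Real.sqrt (1/k) := Real.sqrt_pos.2 (by positivity)
      have hcover := maurey_cover hk_pos u hu
      -- numeric work done in caseB_real
      -- put together
      calc volume (convexHull ℝ (Set.range u))
          ≤ volume (⋃ c : Sym (Fin (2*N)) k,
              Metric.closedBall ((k:ℝ)⁻¹ • (Multiset.map u (c : Multiset (Fin (2*N)))).sum)
                (Real.sqrt (1/k))) := measure_mono hcover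
        _ ≤ ∑' c : Sym (Fin (2*N)) k,
              volume (Metric.closedBall ((k:ℝ)⁻¹ • (Multiset.map u (c : Multiset (Fin (2*N)))).sum)
                (Real.sqrt (1/k))) := measure_iUnion_le _
        _ = ∑ c : Sym (Fin (2*N)) k,
              volume (Metric.closedBall ((k:ℝ)⁻¹ • (Multiset.map u (c : Multiset (Fin (2*N)))).sum)
                (Real.sqrt (1/k))) := tsum_fintype _
        _ = (Fintype.card (Sym (Fin (2*N)) k))
              • volume (Metric.closedBall (0 : EuclideanSpace ℝ (Fin n)) (Real.sqrt (1/k))) := by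
            rw [Finset.sum_congr rfl
              (fun c _ => MeasureTheory.Measure.addHaar_closedBall_center volume _ _),
              Finset.sum_const, Finset.card_univ]
        _ ≤ (Fintype.card (Sym (Fin (2*N)) k))
              • ENNReal.ofReal ((Real.sqrt (1/(k:ℝ)) * Real.sqrt (2*π*Real.exp 1/(n:ℝ)))^n) := by
            rw [nsmul_eq_mul, nsmul_eq_mul]
            exact mul_le_mul_right (volume_closedBall_le n hn hrpos) _
        _ ≤ ENNReal.ofReal (D^n) := by
            rw [nsmul_eq_mul, show ((Fintype.card (Sym (Fin (2*N)) k) : ℕ) : ℝ≥0∞)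
                = ENNReal.ofReal ((Fintype.card (Sym (Fin (2*N)) k) : ℕ) : ℝ) by
              rw [ENNReal.ofReal_natCast],
              ← ENNReal.ofReal_mul (by positivity)]
            apply ENNReal.ofReal_le_ofReal
            rw [hD]
            exact caseB_real n N k hnR (by exact_mod_cast hnN) hk_pos L hLpos
              (Real.exp_log (by positivity)) hk_lb hk_ub hcase
  -- finish: rpow
  have hvKle : volume Kpi ≤ ENNReal.ofReal (D^n) := by
    rw [hKvol]
    exact (measure_mono hsub2).trans hmain
  have hne : ((n:ℝ)) ≠ 0 := ne_of_gt hnR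
  calc (volume Kpi) ^ ((1:ℝ)/n) ≤ (ENNReal.ofReal (D^n)) ^ ((1:ℝ)/n) :=
        ENNReal.rpow_le_rpow hvKle (by positivity)
    _ = ENNReal.ofReal ((D^n) ^ ((1:ℝ)/n)) := by
        rw [← ENNReal.ofReal_rpow_of_nonneg (by positivity) (by positivity)]
    _ = ENNReal.ofReal D := by
        congr 1
        rw [← Real.rpow_natCast D n, ← Real.rpow_mul hD0]
        rw [mul_one_div_cancel hne, Real.rpow_one]

end Main
end

section
/- Let Q₀, Q₁ be rank-k orthogonal projections on ℝⁿ, K ⊂ ℝⁿ a centrally symmetric convex body, A > 0, and T₀ : Q₀ℝⁿ → Q₁ℝⁿ a fixed volume-preserving linear map. Let Z_N(ω) = absconv{√n e₁,…,√n eₙ, g₁(ω),…,g_N(ω)} with g₁,…,g_N independent standard Gaussians. Then P( ‖T₀ : X_{Q₀Z_N(ω)} → X_{Q₁K}‖ ≤ A ) ≤ (A/√(2π))^{kN} |Q₁K|^N. -/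
open MeasureTheory ProbabilityTheory Module Pointwise
open scoped ENNReal NNReal Real

noncomputable def EuclideanSpace.measurableEquiv (ι : Type*) [Fintype ι] :
    EuclideanSpace ℝ ι ≃ᵐ (ι → ℝ) :=
  (MeasurableEquiv.toLp 2 (ι → ℝ)).symm

lemma EuclideanSpace.coe_measurableEquiv (ι : Type*) [Fintype ι] :
    ⇑(EuclideanSpace.measurableEquiv ι) = WithLp.equiv 2 (ι → ℝ) := rfl

lemma EuclideanSpace.coe_measurableEquiv_symm (ι : Type*) [Fintype ι] :
    ⇑(EuclideanSpace.measurableEquiv ι).symm = (WithLp.equiv 2 (ι → ℝ)).symm := rfl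

lemma EuclideanSpace.volume_preserving_measurableEquiv (ι : Type*) [Fintype ι] :
    MeasurePreserving (EuclideanSpace.measurableEquiv ι) :=
  EuclideanSpace.volume_preserving_symm_measurableEquiv_toLp ι

lemma aux_lintegral_fin_prod {m : ℕ} (f : Fin m → ℝ → ℝ≥0∞) (hf : ∀ i, Measurable (f i)) :
    ∫⁻ x : Fin m → ℝ, ∏ i, f i (x i) ∂(Measure.pi fun _ => (volume : Measure ℝ)) =
      ∏ i, ∫⁻ x, f i x := by
  induction m with
  | zero => simp
  | succ m ih =>
    have h := (measurePreserving_piFinSuccAbove (fun _ : Fin (m+1) => (volume : Measure ℝ)) 0).symm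
    have hmeas : Measurable fun x : Fin (m+1) → ℝ => ∏ i, f i (x i) :=
      Finset.measurable_prod _ fun i _ => (hf i).comp (measurable_pi_apply i)
    rw [← h.lintegral_comp hmeas]
    have : ∀ y : ℝ × (Fin m → ℝ),
        (∏ i, f i (((MeasurableEquiv.piFinSuccAbove (fun _ => ℝ) 0).symm y) i)) =
          f 0 y.1 * ∏ i : Fin m, f i.succ (y.2 i) := by
      intro y
      rw [Fin.prod_univ_succ]
      simp [MeasurableEquiv.piFinSuccAbove_symm_apply, Fin.zero_succAbove]
    simp_rw [this]
    have h2 := lintegral_prod_mul (μ := (volume : Measure ℝ))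
      (ν := Measure.pi fun _ : Fin m => (volume : Measure ℝ)) (f := f 0)
      (g := fun y : Fin m → ℝ => ∏ i, f i.succ (y i)) ((hf 0).aemeasurable)
      (Finset.measurable_prod _ fun i _ => (hf i.succ).comp (measurable_pi_apply i)).aemeasurable
    rw [h2, ih _ fun i => hf i.succ, Fin.prod_univ_succ]

lemma aux_map_withDensity_equiv {α β : Type*} [MeasurableSpace α] [MeasurableSpace β]
    (e : α ≃ᵐ β) (μ : Measure α) (f : β → ℝ≥0∞) (hf : Measurable f) :
    Measure.map e (μ.withDensity (f ∘ e)) = (Measure.map e μ).withDensity f := by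
  ext s hs
  rw [Measure.map_apply e.measurable hs, withDensity_apply _ hs,
    withDensity_apply _ (e.measurable hs), setLIntegral_map hs hf e.measurable]
  rfl

lemma aux_pi_gaussian_withDensity (m : ℕ) :
    (Measure.pi fun _ : Fin m => gaussianReal 0 1) =
      (volume : Measure (Fin m → ℝ)).withDensity
        (fun x => ENNReal.ofReal
          ((Real.sqrt (2*Real.pi))⁻¹ ^ m * Real.exp (-(∑ i, (x i)^2)/2))) := by
  have hDfun : ∀ x : Fin m → ℝ,
      ENNReal.ofReal ((Real.sqrt (2*Real.pi))⁻¹ ^ m * Real.exp (-(∑ i, (x i)^2)/2)) =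
        ∏ i, gaussianPDF 0 1 (x i) := by
    intro x
    simp only [gaussianPDF]
    rw [← ENNReal.ofReal_prod_of_nonneg (fun i _ => gaussianPDFReal_nonneg 0 1 (x i))]
    congr 1
    simp only [gaussianPDFReal, NNReal.coe_one, mul_one, sub_zero]
    rw [Finset.prod_mul_distrib, Finset.prod_const, Finset.card_univ, Fintype.card_fin,
      ← Real.exp_sum]
    congr 1
    rw [neg_div, ← Finset.sum_div]
    simp [neg_div]
  refine (Measure.pi_eq fun s hs => ?_)
  rw [withDensity_apply _ (MeasurableSet.univ_pi hs)]
  have : ∀ x : Fin m → ℝ, (Set.pi Set.univ s).indicator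
      (fun x => ENNReal.ofReal
        ((Real.sqrt (2*Real.pi))⁻¹ ^ m * Real.exp (-(∑ i, (x i)^2)/2))) x =
      ∏ i, (s i).indicator (gaussianPDF 0 1) (x i) := by
    intro x
    by_cases hx : x ∈ Set.pi Set.univ s
    · rw [Set.indicator_of_mem hx, hDfun]
      exact Finset.prod_congr rfl fun i _ =>
        (Set.indicator_of_mem (hx i (Set.mem_univ i)) _).symm
    · rw [Set.indicator_of_notMem hx]
      rw [Set.mem_univ_pi] at hx
      push_neg at hx
      obtain ⟨i, hi⟩ := hx
      exact (Finset.prod_eq_zero (Finset.mem_univ i)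
        (Set.indicator_of_notMem hi _)).symm
  rw [← lintegral_indicator (MeasurableSet.univ_pi hs)]
  simp_rw [this]
  rw [show (volume : Measure (Fin m → ℝ)) = Measure.pi fun _ => (volume : Measure ℝ) from
    volume_pi]
  rw [aux_lintegral_fin_prod _ fun i => (measurable_gaussianPDF 0 1).indicator (hs i)]
  refine Finset.prod_congr rfl fun i _ => ?_
  rw [lintegral_indicator (hs i), gaussianReal_of_var_ne_zero 0 one_ne_zero,
    withDensity_apply _ (hs i)]

noncomputable def gaussDens (m : ℕ) (x : EuclideanSpace ℝ (Fin m)) : ℝ≥0∞ :=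
  ENNReal.ofReal ((Real.sqrt (2*Real.pi))⁻¹ ^ m * Real.exp (-‖x‖^2/2))

lemma gaussDens_measurable (m : ℕ) : Measurable (gaussDens m) := by
  apply Measurable.ennreal_ofReal
  fun_prop

lemma gaussDens_le (m : ℕ) (x : EuclideanSpace ℝ (Fin m)) :
    gaussDens m x ≤ ENNReal.ofReal ((Real.sqrt (2*Real.pi))⁻¹ ^ m) := by
  apply ENNReal.ofReal_le_ofReal
  have h1 : Real.exp (-‖x‖^2/2) ≤ 1 := by
    rw [Real.exp_le_one_iff]
    have : (0:ℝ) ≤ ‖x‖^2 := sq_nonneg _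
    nlinarith
  have h2 : (0:ℝ) ≤ (Real.sqrt (2*Real.pi))⁻¹ ^ m := by positivity
  nlinarith [Real.exp_pos (-‖x‖^2/2)]

lemma aux_gaussE (m : ℕ) :
    Measure.map (EuclideanSpace.measurableEquiv (Fin m)).symm
        (Measure.pi fun _ : Fin m => gaussianReal 0 1) =
      (volume : Measure (EuclideanSpace ℝ (Fin m))).withDensity (gaussDens m) := by
  rw [aux_pi_gaussian_withDensity m]
  have hfun : (fun x : Fin m → ℝ => ENNReal.ofReal
      ((Real.sqrt (2*Real.pi))⁻¹ ^ m * Real.exp (-(∑ i, (x i)^2)/2))) =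
      (gaussDens m) ∘ (EuclideanSpace.measurableEquiv (Fin m)).symm := by
    funext x
    simp only [gaussDens, Function.comp_apply]
    have : ‖(EuclideanSpace.measurableEquiv (Fin m)).symm x‖^2 = ∑ i, (x i)^2 := by
      rw [EuclideanSpace.norm_eq, Real.sq_sqrt (by positivity)]
      refine Finset.sum_congr rfl fun i _ => ?_
      rw [EuclideanSpace.coe_measurableEquiv_symm]
      simp [Real.norm_eq_abs, sq_abs]
    rw [this]
  rw [hfun, aux_map_withDensity_equiv _ _ _ (gaussDens_measurable m),
    ((EuclideanSpace.volume_preserving_measurableEquiv (Fin m)).symm _).map_eq]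

lemma aux_rotation (m : ℕ) (U : EuclideanSpace ℝ (Fin m) ≃ₗᵢ[ℝ] EuclideanSpace ℝ (Fin m)) :
    Measure.map U ((volume : Measure (EuclideanSpace ℝ (Fin m))).withDensity (gaussDens m)) =
      (volume : Measure (EuclideanSpace ℝ (Fin m))).withDensity (gaussDens m) := by
  set e : EuclideanSpace ℝ (Fin m) ≃ᵐ EuclideanSpace ℝ (Fin m) :=
    U.toHomeomorph.toMeasurableEquiv with he
  have hcoe : (e : EuclideanSpace ℝ (Fin m) → EuclideanSpace ℝ (Fin m)) = U := rfl
  have hden : gaussDens m ∘ e = gaussDens m := by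
    funext x
    simp only [Function.comp_apply, gaussDens, hcoe]
    rw [U.norm_map x]
  calc Measure.map U (volume.withDensity (gaussDens m))
      = Measure.map e (volume.withDensity (gaussDens m ∘ e)) := by rw [hden, hcoe]
    _ = (Measure.map e volume).withDensity (gaussDens m) :=
        aux_map_withDensity_equiv _ _ _ (gaussDens_measurable m)
    _ = volume.withDensity (gaussDens m) := by
        rw [show Measure.map e volume = volume by
          rw [hcoe]; exact U.measurePreserving.map_eq]

lemma aux_marginal {k n : ℕ} (hkn : k ≤ n) :
    Measure.map (fun (x : Fin n → ℝ) (j : Fin k) => x (Fin.castLE hkn j))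
        (Measure.pi fun _ : Fin n => gaussianReal 0 1) =
      Measure.pi fun _ : Fin k => gaussianReal 0 1 := by
  classical
  set p : Fin n → Prop := fun i => (i : ℕ) < k with hp
  have h1 := measurePreserving_piEquivPiSubtypeProd
    (fun _ : Fin n => gaussianReal 0 1) p
  set e₂ : Fin k ≃ Subtype p := {
    toFun := fun j => ⟨Fin.castLE hkn j, j.2⟩
    invFun := fun i => ⟨(i : Fin n), i.2⟩
    left_inv := fun j => rfl
    right_inv := fun i => rfl } with he₂
  have h2 := measurePreserving_piCongrLeft
    (fun _ : Fin k => gaussianReal 0 1) e₂.symm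
  -- the projection as a composition
  have hfun : (fun (x : Fin n → ℝ) (j : Fin k) => x (Fin.castLE hkn j)) =
      (MeasurableEquiv.piCongrLeft (fun _ : Fin k => ℝ) e₂.symm) ∘
        (Prod.fst ∘ (MeasurableEquiv.piEquivPiSubtypeProd (fun _ : Fin n => ℝ) p)) := by
    funext x
    funext j
    simp only [Function.comp_apply, MeasurableEquiv.coe_piCongrLeft]
    have : j = e₂.symm (e₂ j) := (e₂.symm_apply_apply j).symm
    conv_rhs => rw [this]
    rw [Equiv.piCongrLeft_apply_apply]
    rfl
  rw [hfun, ← Measure.map_map, ← Measure.map_map]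
  · rw [h1.map_eq]
    have h3 : Measure.map Prod.fst
        ((Measure.pi fun i : Subtype p => gaussianReal 0 1).prod
          (Measure.pi fun i : {i // ¬ p i} => gaussianReal 0 1)) =
        Measure.pi fun _ : Subtype p => gaussianReal 0 1 := by
      rw [Measure.map_fst_prod]
      simp
    rw [h3]
    have : (Measure.pi fun _ : Subtype p => gaussianReal 0 1) =
        (Measure.pi fun i' : Subtype p => (fun _ : Fin k => gaussianReal 0 1) (e₂.symm i')) := rfl
    rw [this, h2.map_eq]
  all_goals
    first
      | exact measurable_fst
      | exact (MeasurableEquiv.measurable _)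
      | exact measurable_fst.comp (MeasurableEquiv.measurable _)
      | exact (MeasurableEquiv.measurable _).comp
          (measurable_fst.comp (MeasurableEquiv.measurable _))

lemma aux_density_bound (m : ℕ) (S : Set (EuclideanSpace ℝ (Fin m))) (hS : MeasurableSet S) :
    (volume : Measure (EuclideanSpace ℝ (Fin m))).withDensity (gaussDens m) S ≤
      ENNReal.ofReal ((Real.sqrt (2*Real.pi))⁻¹ ^ m) * volume S := by
  rw [withDensity_apply _ hS]
  calc ∫⁻ x in S, gaussDens m x ∂volume
      ≤ ∫⁻ _ in S, ENNReal.ofReal ((Real.sqrt (2*Real.pi))⁻¹ ^ m) ∂volume :=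
        lintegral_mono fun x => gaussDens_le m x
    _ = ENNReal.ofReal ((Real.sqrt (2*Real.pi))⁻¹ ^ m) * volume S := by
        rw [setLIntegral_const]

lemma aux_vol_le_hausdorff (m : ℕ) (S : Set (EuclideanSpace ℝ (Fin m))) (hS : MeasurableSet S) :
    volume S ≤ μH[m] S := by
  set f := EuclideanSpace.measurableEquiv (Fin m) with hf
  have himg : f '' S = f.symm ⁻¹' S := Equiv.image_eq_preimage_symm _ _
  have himgm : MeasurableSet (f '' S) := by
    rw [himg]; exact f.symm.measurable hS
  have h1 : volume S = volume (f '' S) := by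
    have := (EuclideanSpace.volume_preserving_measurableEquiv (Fin m)).measure_preimage
      himgm.nullMeasurableSet
    rw [← this, Set.preimage_image_eq S f.injective]
  rw [h1]
  have h2 : (volume : Measure (Fin m → ℝ)) (f '' S) = μH[m] (f '' S) := by
    rw [← hausdorffMeasure_pi_real (ι := Fin m)]
    simp
  rw [h2]
  have h3 : μH[(m:ℝ)] (f '' S) ≤ (1 : ℝ≥0∞) ^ (m : ℝ) * μH[(m:ℝ)] S := by
    have hlip : LipschitzWith 1 (f : EuclideanSpace ℝ (Fin m) → (Fin m → ℝ)) := by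
      rw [hf, EuclideanSpace.coe_measurableEquiv]
      exact PiLp.lipschitzWith_ofLp 2 _
    exact hlip.hausdorffMeasure_image_le (by positivity) S
  simpa using h3

lemma aux_hausdorff_compact_lt_top (m : ℕ) (T : Set (EuclideanSpace ℝ (Fin m)))
    (hT : IsCompact T) : μH[m] T < ⊤ := by
  set e := WithLp.equiv 2 (Fin m → ℝ) with he
  obtain ⟨C, hlipsymm⟩ : ∃ C : ℝ≥0, LipschitzWith C ⇑e.symm :=
    ⟨_, (PiLp.antilipschitzWith_ofLp 2 (fun _ : Fin m => ℝ)).to_rightInverse e.right_inv⟩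
  have hTeq : T = e.symm '' (e '' T) := by
    rw [← Set.image_comp]; simp
  have h1 : μH[(m:ℝ)] T ≤ (C : ℝ≥0∞) ^ (m:ℝ) * μH[(m:ℝ)] (e '' T) := by
    conv_lhs => rw [hTeq]
    exact hlipsymm.hausdorffMeasure_image_le (by positivity) _
  have h2 : μH[(m:ℝ)] (e '' T) = volume (e '' T) := by
    rw [← hausdorffMeasure_pi_real (ι := Fin m)]
    simp
  have h3 : volume (e '' T) < ⊤ := by
    have : IsCompact (e '' T) := hT.image (PiLp.lipschitzWith_ofLp 2 _).continuous
    exact this.measure_lt_top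
  refine lt_of_le_of_lt h1 ?_
  rw [h2]
  exact ENNReal.mul_lt_top
    (ENNReal.rpow_lt_top_of_nonneg (by positivity) ENNReal.coe_ne_top) h3

lemma aux_proj_decomp {n k : ℕ} (hkn : k ≤ n)
    (Q : EuclideanSpace ℝ (Fin n) →L[ℝ] EuclideanSpace ℝ (Fin n))
    (hproj : Q ∘L Q = Q)
    (hsa : ∀ x y, (inner ℝ (Q x) y : ℝ) = inner ℝ x (Q y))
    (hrank : finrank ℝ (LinearMap.range (Q : EuclideanSpace ℝ (Fin n) →ₗ[ℝ]
        EuclideanSpace ℝ (Fin n))) = k) :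
    ∃ (φ : EuclideanSpace ℝ (Fin k) → EuclideanSpace ℝ (Fin n))
      (U : EuclideanSpace ℝ (Fin n) ≃ₗᵢ[ℝ] EuclideanSpace ℝ (Fin n)),
      Isometry φ ∧
      Set.range φ = (LinearMap.range (Q : EuclideanSpace ℝ (Fin n) →ₗ[ℝ]
        EuclideanSpace ℝ (Fin n)) : Set (EuclideanSpace ℝ (Fin n))) ∧
      (∀ x, Q x = φ (WithLp.toLp 2 (fun j => U x (Fin.castLE hkn j)))) := by
  classical
  set V := LinearMap.range (Q : EuclideanSpace ℝ (Fin n) →ₗ[ℝ] EuclideanSpace ℝ (Fin n)) with hV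
  have hQid : ∀ y : EuclideanSpace ℝ (Fin n), y ∈ V → Q y = y := by
    rintro y ⟨z, rfl⟩
    have := congrArg (fun T : EuclideanSpace ℝ (Fin n) →L[ℝ] EuclideanSpace ℝ (Fin n) => T z) hproj
    simpa using this
  set b : OrthonormalBasis (Fin k) ℝ V :=
    (stdOrthonormalBasis ℝ V).reindex (finCongr hrank) with hb
  set φ : EuclideanSpace ℝ (Fin k) → EuclideanSpace ℝ (Fin n) :=
    fun c => ((b.repr.symm c : V) : EuclideanSpace ℝ (Fin n)) with hφdef
  have hφ : Isometry φ := V.subtypeₗᵢ.isometry.comp b.repr.symm.isometry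
  have hrangeφ : Set.range φ = (V : Set (EuclideanSpace ℝ (Fin n))) := by
    have : Set.range φ = Subtype.val '' (Set.range (b.repr.symm)) := by
      rw [← Set.range_comp]; rfl
    rw [this, b.repr.symm.surjective.range_eq, Set.image_univ, Subtype.range_coe]
  -- ambient orthonormal family
  set s : Set (Fin n) := {i | (i : ℕ) < k} with hs
  set v : Fin n → EuclideanSpace ℝ (Fin n) :=
    fun i => if h : (i : ℕ) < k then ((b ⟨i, h⟩ : V) : EuclideanSpace ℝ (Fin n)) else 0 with hv
  have hvon : Orthonormal ℝ (s.restrict v) := by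
    rw [orthonormal_iff_ite]
    intro i j
    have hi : ((i : Fin n) : ℕ) < k := i.2
    have hj : ((j : Fin n) : ℕ) < k := j.2
    have hresti : s.restrict v i = ((b ⟨(i : Fin n), hi⟩ : V) : EuclideanSpace ℝ (Fin n)) := by
      exact dif_pos hi
    have hrestj : s.restrict v j = ((b ⟨(j : Fin n), hj⟩ : V) : EuclideanSpace ℝ (Fin n)) := by
      exact dif_pos hj
    rw [hresti, hrestj, ← Submodule.coe_inner,
      orthonormal_iff_ite.mp b.orthonormal]
    have : (⟨(i : Fin n), hi⟩ : Fin k) = ⟨(j : Fin n), hj⟩ ↔ i = j := by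
      constructor
      · intro h
        have h2 : ((i : Fin n) : ℕ) = ((j : Fin n) : ℕ) := Fin.mk_eq_mk.mp h
        exact Subtype.ext (Fin.ext h2)
      · rintro rfl; rfl
    by_cases h : i = j
    · simp [h]
    · rw [if_neg h, if_neg (fun hc => h (this.mp hc))]
  obtain ⟨B, hB⟩ := hvon.exists_orthonormalBasis_extension_of_card_eq
    (by simp [finrank_euclideanSpace_fin])
  refine ⟨φ, B.repr, hφ, hrangeφ, ?_⟩
  intro x
  have hmem : Q x ∈ V := ⟨x, rfl⟩
  have key : b.repr ⟨Q x, hmem⟩ = WithLp.toLp 2 (fun j => B.repr x (Fin.castLE hkn j)) := by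
    ext j
    show (b.repr ⟨Q x, hmem⟩) j = B.repr x (Fin.castLE hkn j)
    rw [OrthonormalBasis.repr_apply_apply, OrthonormalBasis.repr_apply_apply]
    have hBj : B (Fin.castLE hkn j) = ((b j : V) : EuclideanSpace ℝ (Fin n)) := by
      rw [hB (Fin.castLE hkn j) (by exact j.2)]
      simp only [hv]
      rw [dif_pos (show ((Fin.castLE hkn j : Fin n) : ℕ) < k from j.2)]
      congr 1
    rw [hBj]
    have hcoe : (inner ℝ (b j) (⟨Q x, hmem⟩ : V) : ℝ) =
        inner ℝ ((b j : V) : EuclideanSpace ℝ (Fin n)) (Q x) := rfl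
    rw [hcoe]
    have hbj : Q ((b j : V) : EuclideanSpace ℝ (Fin n)) = ((b j : V) : EuclideanSpace ℝ (Fin n)) :=
      hQid _ (b j).2
    calc (inner ℝ ((b j : V) : EuclideanSpace ℝ (Fin n)) (Q x) : ℝ)
        = inner ℝ (Q ((b j : V) : EuclideanSpace ℝ (Fin n))) x := by rw [hsa]
      _ = inner ℝ ((b j : V) : EuclideanSpace ℝ (Fin n)) x := by rw [hbj]
  have : φ (WithLp.toLp 2 (fun j => B.repr x (Fin.castLE hkn j))) = ((b.repr.symm (b.repr ⟨Q x, hmem⟩) : V) :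
      EuclideanSpace ℝ (Fin n)) := by rw [key]
  rw [this, LinearIsometryEquiv.symm_apply_apply]

theorem gaussian_polytope_opnorm_prob (n N k : ℕ) (hn : 0 < n) (hN : 0 < N)
    (hk : 1 ≤ k) (hkn : k ≤ n)
    (K : Set (EuclideanSpace ℝ (Fin n)))
    (hKconv : Convex ℝ K) (hKcomp : IsCompact K) (hKint : (interior K).Nonempty)
    (hKsym : K = -K)
    (Q₀ Q₁ : EuclideanSpace ℝ (Fin n) →L[ℝ] EuclideanSpace ℝ (Fin n))
    (hQ₀proj : Q₀ ∘L Q₀ = Q₀) (hQ₁proj : Q₁ ∘L Q₁ = Q₁)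
    (hQ₀sa : ∀ x y, (inner ℝ (Q₀ x) y : ℝ) = inner ℝ x (Q₀ y))
    (hQ₁sa : ∀ x y, (inner ℝ (Q₁ x) y : ℝ) = inner ℝ x (Q₁ y))
    (hQ₀rank : finrank ℝ (LinearMap.range (Q₀ : EuclideanSpace ℝ (Fin n) →ₗ[ℝ]
        EuclideanSpace ℝ (Fin n))) = k)
    (hQ₁rank : finrank ℝ (LinearMap.range (Q₁ : EuclideanSpace ℝ (Fin n) →ₗ[ℝ]
        EuclideanSpace ℝ (Fin n))) = k)
    (A : ℝ) (hA : 0 < A)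
    (T₀ : EuclideanSpace ℝ (Fin n) →ₗ[ℝ] EuclideanSpace ℝ (Fin n))
    -- `T₀` maps the range of `Q₀` into the range of `Q₁`
    (hT₀range : ∀ x ∈ LinearMap.range (Q₀ : EuclideanSpace ℝ (Fin n) →ₗ[ℝ]
        EuclideanSpace ℝ (Fin n)),
      T₀ x ∈ LinearMap.range (Q₁ : EuclideanSpace ℝ (Fin n) →ₗ[ℝ]
        EuclideanSpace ℝ (Fin n)))
    -- `T₀` preserves `k`-dimensional volume on the range of `Q₀`
    (hT₀vol : ∀ S : Set (EuclideanSpace ℝ (Fin n)),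
      S ⊆ (LinearMap.range (Q₀ : EuclideanSpace ℝ (Fin n) →ₗ[ℝ]
        EuclideanSpace ℝ (Fin n)) : Set (EuclideanSpace ℝ (Fin n))) →
      μH[k] (T₀ '' S) = μH[k] S)
    -- the random polytope `Z_N(ω)`
    (Z : (Fin N → (Fin n → ℝ)) → Set (EuclideanSpace ℝ (Fin n)))
    (hZ : ∀ ω, Z ω = convexHull ℝ
      (((Set.range fun j : Fin n =>
          Real.sqrt n • (EuclideanSpace.single j (1 : ℝ))) ∪
        (Set.range fun i : Fin N => (WithLp.equiv 2 (Fin n → ℝ)).symm (ω i))) ∪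
       -((Set.range fun j : Fin n =>
          Real.sqrt n • (EuclideanSpace.single j (1 : ℝ))) ∪
        (Set.range fun i : Fin N => (WithLp.equiv 2 (Fin n → ℝ)).symm (ω i))))) :
    (Measure.pi fun _ : Fin N => (Measure.pi fun _ : Fin n => gaussianReal 0 1))
        {ω : Fin N → (Fin n → ℝ) |
          T₀ '' (Q₀ '' Z ω) ⊆ A • (Q₁ '' K : Set (EuclideanSpace ℝ (Fin n)))} ≤
      ENNReal.ofReal ((A / Real.sqrt (2 * Real.pi)) ^ (k * N) *
        ((μH[k] (Q₁ '' K : Set (EuclideanSpace ℝ (Fin n)))).toReal) ^ N) := by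
  classical
  obtain ⟨φ₀, U, hφ₀, hrange₀, hQ₀eq⟩ := aux_proj_decomp hkn Q₀ hQ₀proj hQ₀sa hQ₀rank
  obtain ⟨φ₁, U₁, hφ₁, hrange₁, hQ₁eq⟩ := aux_proj_decomp hkn Q₁ hQ₁proj hQ₁sa hQ₁rank
  have hT : Continuous T₀ := T₀.continuous_of_finiteDimensional
  set Bs : Set (EuclideanSpace ℝ (Fin n)) := A • (Q₁ '' K) with hBs
  have hK1 : IsCompact (Q₁ '' K) := hKcomp.image Q₁.continuous
  have hBcomp : IsCompact Bs := by
    rw [hBs, ← Set.image_smul]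
    exact hK1.image (continuous_const_smul A)
  have hBclosed : IsClosed Bs := hBcomp.isClosed
  set S : Set (EuclideanSpace ℝ (Fin k)) := (fun c => T₀ (φ₀ c)) ⁻¹' Bs with hS
  have hSclosed : IsClosed S := hBclosed.preimage (hT.comp hφ₀.continuous)
  have hSmeas : MeasurableSet S := hSclosed.measurableSet
  set EE : Set (EuclideanSpace ℝ (Fin n)) := {y | T₀ (Q₀ y) ∈ Bs} with hEE
  have hEEclosed : IsClosed EE := hBclosed.preimage (hT.comp Q₀.continuous)
  have hEEmeas : MeasurableSet EE := hEEclosed.measurableSet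
  set L : EuclideanSpace ℝ (Fin n) → EuclideanSpace ℝ (Fin k) :=
    fun x => WithLp.toLp 2 (fun j => U x (Fin.castLE hkn j)) with hL
  have hprojmeasE : Measurable (fun (y : EuclideanSpace ℝ (Fin n)) => WithLp.toLp 2 (fun (j : Fin k) =>
      y (Fin.castLE hkn j))) := by
    exact (MeasurableEquiv.toLp 2 (Fin k → ℝ)).measurable.comp (measurable_pi_lambda _ fun j =>
      (measurable_pi_apply (Fin.castLE hkn j)).comp
        (EuclideanSpace.measurableEquiv (Fin n)).measurable)
  have hLmeas : Measurable L :=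
    hprojmeasE.comp U.continuous.measurable
  have hprojmeasP : Measurable (fun (x : Fin n → ℝ) (j : Fin k) => x (Fin.castLE hkn j)) :=
    measurable_pi_lambda _ fun j => measurable_pi_apply (Fin.castLE hkn j)
  have hEEL : EE = L ⁻¹' S := by
    ext y
    simp only [hEE, Set.mem_setOf_eq, Set.mem_preimage, hS, hL]
    rw [hQ₀eq y]
  set Epi : Set (Fin n → ℝ) :=
    {x | T₀ (Q₀ ((WithLp.equiv 2 (Fin n → ℝ)).symm x)) ∈ Bs} with hEpi
  -- Step 1: event inclusion
  have hincl : {ω : Fin N → (Fin n → ℝ) |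
      T₀ '' (Q₀ '' Z ω) ⊆ A • (Q₁ '' K : Set (EuclideanSpace ℝ (Fin n)))} ⊆
      Set.pi Set.univ (fun _ : Fin N => Epi) := by
    intro ω hω i _
    have hmem : (WithLp.equiv 2 (Fin n → ℝ)).symm (ω i) ∈ Z ω := by
      rw [hZ ω]
      apply subset_convexHull
      exact Or.inl (Or.inr ⟨i, rfl⟩)
    exact hω (Set.mem_image_of_mem T₀ (Set.mem_image_of_mem Q₀ hmem))
  set μn : Measure (Fin n → ℝ) := Measure.pi fun _ : Fin n => gaussianReal 0 1 with hμn
  -- Step 2: single coordinate bound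
  have hEpiEE : (EuclideanSpace.measurableEquiv (Fin n)).symm ⁻¹' EE = Epi := rfl
  have hmap1 : μn Epi =
      (Measure.map (EuclideanSpace.measurableEquiv (Fin n)).symm μn) EE := by
    rw [Measure.map_apply (MeasurableEquiv.measurable _) hEEmeas, hEpiEE]
  have hmap2 : (Measure.map (EuclideanSpace.measurableEquiv (Fin n)).symm μn) EE =
      ((volume : Measure (EuclideanSpace ℝ (Fin n))).withDensity (gaussDens n)) EE := by
    rw [hμn, aux_gaussE n]
  have hmap3 : ((volume : Measure (EuclideanSpace ℝ (Fin n))).withDensity (gaussDens n)) EE =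
      ((volume : Measure (EuclideanSpace ℝ (Fin k))).withDensity (gaussDens k)) S := by
    rw [hEEL, ← Measure.map_apply hLmeas hSmeas]
    have hLcomp : Measure.map L
        ((volume : Measure (EuclideanSpace ℝ (Fin n))).withDensity (gaussDens n)) =
        Measure.map (fun (y : EuclideanSpace ℝ (Fin n)) => WithLp.toLp 2 (fun (j : Fin k) => y (Fin.castLE hkn j)))
          ((volume : Measure (EuclideanSpace ℝ (Fin n))).withDensity (gaussDens n)) := by
      have : L = (fun (y : EuclideanSpace ℝ (Fin n)) => WithLp.toLp 2 (fun (j : Fin k) => y (Fin.castLE hkn j))) ∘ U :=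
        rfl
      rw [this, ← Measure.map_map hprojmeasE U.continuous.measurable,
        aux_rotation n U]
    rw [hLcomp]
    have hproj : Measure.map
        (fun (y : EuclideanSpace ℝ (Fin n)) => WithLp.toLp 2 (fun (j : Fin k) => y (Fin.castLE hkn j)))
        ((volume : Measure (EuclideanSpace ℝ (Fin n))).withDensity (gaussDens n)) =
        (volume : Measure (EuclideanSpace ℝ (Fin k))).withDensity (gaussDens k) := by
      rw [← aux_gaussE n, Measure.map_map hprojmeasE
        (MeasurableEquiv.measurable (EuclideanSpace.measurableEquiv (Fin n)).symm)]
      have hfe : (fun (y : EuclideanSpace ℝ (Fin n)) => WithLp.toLp 2 (fun (j : Fin k) => y (Fin.castLE hkn j))) ∘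
          (EuclideanSpace.measurableEquiv (Fin n)).symm =
          ((EuclideanSpace.measurableEquiv (Fin k)).symm : (Fin k → ℝ) → EuclideanSpace ℝ (Fin k)) ∘
          (fun (x : Fin n → ℝ) (j : Fin k) => x (Fin.castLE hkn j)) := rfl
      rw [hfe, ← Measure.map_map
        (MeasurableEquiv.measurable (EuclideanSpace.measurableEquiv (Fin k)).symm)
        hprojmeasP, aux_marginal hkn, aux_gaussE k]
    rw [hproj]
  -- Hausdorff measure bound on S
  have hmuS : μH[k] S ≤ (‖A‖₊ : ℝ≥0∞) ^ k * μH[k] (Q₁ '' K : Set (EuclideanSpace ℝ (Fin n))) := by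
    have h1 : μH[(k:ℝ)] S = μH[(k:ℝ)] ((T₀ ⁻¹' Bs) ∩ Set.range φ₀) := by
      have : S = φ₀ ⁻¹' (T₀ ⁻¹' Bs) := rfl
      rw [this, hφ₀.hausdorffMeasure_preimage (Or.inl (by positivity))]
    have h2 : μH[(k:ℝ)] ((T₀ ⁻¹' Bs) ∩ Set.range φ₀) =
        μH[(k:ℝ)] (T₀ '' ((T₀ ⁻¹' Bs) ∩ Set.range φ₀)) := by
      refine (hT₀vol _ ?_).symm
      rw [hrange₀]
      exact Set.inter_subset_right
    have h3 : T₀ '' ((T₀ ⁻¹' Bs) ∩ Set.range φ₀) ⊆ Bs :=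
      (Set.image_mono Set.inter_subset_left).trans (Set.image_preimage_subset _ _)
    have h4 : μH[(k:ℝ)] Bs = (‖A‖₊ ^ (k:ℝ)) • μH[(k:ℝ)] (Q₁ '' K) :=
      Measure.hausdorffMeasure_smul₀ (by positivity) (ne_of_gt hA) _
    calc μH[(k:ℝ)] S = μH[(k:ℝ)] (T₀ '' ((T₀ ⁻¹' Bs) ∩ Set.range φ₀)) := by rw [h1, h2]
      _ ≤ μH[(k:ℝ)] Bs := measure_mono h3
      _ = (‖A‖₊ ^ (k:ℝ)) • μH[(k:ℝ)] (Q₁ '' K) := h4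
      _ = (‖A‖₊ : ℝ≥0∞) ^ k * μH[(k:ℝ)] (Q₁ '' K) := by
          rw [ENNReal.smul_def, smul_eq_mul]
          congr 1
          rw [ENNReal.coe_rpow_of_nonneg _ (by positivity : (0:ℝ) ≤ (k:ℝ)),
            ENNReal.rpow_natCast]
  -- finiteness
  have hHfin : μH[k] (Q₁ '' K : Set (EuclideanSpace ℝ (Fin n))) ≠ ⊤ := by
    set T : Set (EuclideanSpace ℝ (Fin k)) := φ₁ ⁻¹' (Q₁ '' K) with hT1
    have hQ1sub : (Q₁ '' K) ⊆ Set.range φ₁ := by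
      rw [hrange₁]
      rintro y ⟨x, -, rfl⟩
      exact ⟨x, rfl⟩
    have heq : μH[(k:ℝ)] T = μH[(k:ℝ)] (Q₁ '' K : Set (EuclideanSpace ℝ (Fin n))) := by
      rw [hT1, hφ₁.hausdorffMeasure_preimage (Or.inl (by positivity)),
        Set.inter_eq_self_of_subset_left hQ1sub]
    have hTcomp : IsCompact T := by
      refine Metric.isCompact_of_isClosed_isBounded
        (hK1.isClosed.preimage hφ₁.continuous) ?_
      exact hφ₁.antilipschitz.isBounded_preimage hK1.isBounded
    rw [← heq]
    exact (aux_hausdorff_compact_lt_top k T hTcomp).ne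
  -- single-coordinate bound
  have hsingle : μn Epi ≤ ENNReal.ofReal ((A / Real.sqrt (2 * Real.pi)) ^ k *
      (μH[k] (Q₁ '' K : Set (EuclideanSpace ℝ (Fin n)))).toReal) := by
    have hc : (0:ℝ) ≤ (Real.sqrt (2*Real.pi))⁻¹ ^ k := by positivity
    calc μn Epi = ((volume : Measure (EuclideanSpace ℝ (Fin k))).withDensity (gaussDens k)) S := by
          rw [hmap1, hmap2, hmap3]
      _ ≤ ENNReal.ofReal ((Real.sqrt (2*Real.pi))⁻¹ ^ k) * volume S :=
          aux_density_bound k S hSmeas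
      _ ≤ ENNReal.ofReal ((Real.sqrt (2*Real.pi))⁻¹ ^ k) * μH[k] S :=
          mul_le_mul_right (aux_vol_le_hausdorff k S hSmeas) _
      _ ≤ ENNReal.ofReal ((Real.sqrt (2*Real.pi))⁻¹ ^ k) *
          ((‖A‖₊ : ℝ≥0∞) ^ k * μH[k] (Q₁ '' K : Set (EuclideanSpace ℝ (Fin n)))) :=
          mul_le_mul_right hmuS _
      _ = ENNReal.ofReal ((A / Real.sqrt (2 * Real.pi)) ^ k *
          (μH[k] (Q₁ '' K : Set (EuclideanSpace ℝ (Fin n)))).toReal) := by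
          have h5 : ((‖A‖₊ : ℝ≥0∞) ^ k) = ENNReal.ofReal (A ^ k) := by
            rw [ENNReal.ofReal_pow hA.le]
            congr 1
            rw [← Real.enorm_eq_ofReal hA.le]
            exact (enorm_eq_nnnorm A).symm
          conv_lhs => rw [h5, ← ENNReal.ofReal_toReal hHfin]
          rw [← ENNReal.ofReal_mul (by positivity), ← ENNReal.ofReal_mul (by positivity)]
          congr 1
          rw [div_eq_mul_inv, mul_pow]
          ring
  -- assemble
  calc (Measure.pi fun _ : Fin N => (Measure.pi fun _ : Fin n => gaussianReal 0 1))
        {ω : Fin N → (Fin n → ℝ) |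
          T₀ '' (Q₀ '' Z ω) ⊆ A • (Q₁ '' K : Set (EuclideanSpace ℝ (Fin n)))}
      ≤ (Measure.pi fun _ : Fin N => μn) (Set.pi Set.univ (fun _ : Fin N => Epi)) :=
        measure_mono hincl
    _ = μn Epi ^ N := by
        rw [Measure.pi_pi]
        simp [Finset.prod_const]
    _ ≤ (ENNReal.ofReal ((A / Real.sqrt (2 * Real.pi)) ^ k *
          (μH[k] (Q₁ '' K : Set (EuclideanSpace ℝ (Fin n)))).toReal)) ^ N :=
        pow_le_pow_left' hsingle N
    _ = ENNReal.ofReal ((A / Real.sqrt (2 * Real.pi)) ^ (k * N) *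
          ((μH[k] (Q₁ '' K : Set (EuclideanSpace ℝ (Fin n)))).toReal) ^ N) := by
        rw [← ENNReal.ofReal_pow (by positivity), mul_pow, ← pow_mul]
end
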